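/- arXiv:1706.02212 — 5 statements merged into one kernel-verified Lean document; each statement's English description precedes it below -/
import Mathlib

section
/- Let d ≥ 1, σ a state on ℂ^d, ε ∈ (0,1], and let φ be a Schur concave real-valued function on the set of states on ℂ^d. Then ρ*_ε(σ) maximizes φ over B_ε(σ) and ρ_{*,ε}(σ) minimizes φ over B_ε(σ). If φ is strictly Schur concave, then every maximizer of φ over B_ε(σ) is unitarily equivalent to ρ*_ε(σ) and every minimizer is unitarily equivalent to ρ_{*,ε}(σ). If φ is in addition strictly concave (as a function on the convex set of states), then ρ*_ε(σ) is the unique maximizer of φ over B_ε(σ). -/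
open scoped BigOperators ComplexOrder

noncomputable section

/-- A quantum state on `ℂ^d`: a positive semidefinite `d × d` complex matrix of trace 1. -/
def MState (d : ℕ) : Type :=
  {m : Matrix (Fin d) (Fin d) ℂ // m.PosSemidef ∧ m.trace = 1}

/-- Eigenvalues of a matrix (junk value `0` if the matrix is not Hermitian). -/
noncomputable def eigs {d : ℕ} (A : Matrix (Fin d) (Fin d) ℂ) : Fin d → ℝ :=
  if h : A.IsHermitian then h.eigenvalues else 0

/-- The trace norm of a Hermitian matrix: the sum of the absolute values of its eigenvalues. -/
noncomputable def traceNorm {d : ℕ} (A : Matrix (Fin d) (Fin d) ℂ) : ℝ :=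
  ∑ i, |eigs A i|

/-- Membership in the ε-ball (in trace distance) around the state `σ`:
`ω ∈ B_ε(σ) ↔ (1/2)‖ω − σ‖₁ ≤ ε`. -/
def inBall {d : ℕ} (ε : ℝ) (σ ω : MState d) : Prop :=
  (1 / 2 : ℝ) * traceNorm (ω.1 - σ.1) ≤ ε

/-- Sum of the `k` largest entries of a vector (counted with multiplicity). -/
noncomputable def kMaxSum {d : ℕ} (v : Fin d → ℝ) (k : ℕ) : ℝ :=
  sSup ((fun s : Finset (Fin d) => ∑ i ∈ s, v i) '' {s | s.card = k})

/-- Vector majorization `x ≺ y`: for each `k = 1, …, d` the sum of the `k` largest entries of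
`x` is at most that of `y`, with equality at `k = d`. -/
def vMaj {d : ℕ} (x y : Fin d → ℝ) : Prop :=
  (∀ k, 1 ≤ k → k ≤ d → kMaxSum x k ≤ kMaxSum y k) ∧ kMaxSum x d = kMaxSum y d

/-- State majorization `ρ ≺ σ` (majorization of the eigenvalue vectors). -/
def Maj {d : ℕ} (ρ σ : MState d) : Prop :=
  vMaj (eigs ρ.1) (eigs σ.1)

/-- Two states are unitarily equivalent iff they have the same eigenvalues with the same
multiplicities. -/
def UnitarilyEquiv {d : ℕ} (ρ σ : MState d) : Prop :=
  ∃ π : Equiv.Perm (Fin d), eigs ρ.1 = eigs σ.1 ∘ π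

/-- The von Neumann entropy (base 2): the Shannon entropy of the eigenvalues. -/
noncomputable def vnEnt {d : ℕ} (ρ : MState d) : ℝ :=
  -∑ i, eigs ρ.1 i * Real.logb 2 (eigs ρ.1 i)

/-- The completely mixed state matrix `(1/d)·I`. -/
noncomputable def mixedMat (d : ℕ) : Matrix (Fin d) (Fin d) ℂ :=
  ((d : ℂ)⁻¹) • 1

/-- `φ` is Schur concave: `ρ ≺ σ` implies `φ(ρ) ≥ φ(σ)`. -/
def SchurConcave {d : ℕ} (φ : MState d → ℝ) : Prop :=
  ∀ ρ σ : MState d, Maj ρ σ → φ σ ≤ φ ρ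

/-- `φ` is strictly Schur concave: `φ(ρ) > φ(σ)` whenever `ρ ≺ σ` and `ρ` is not unitarily
equivalent to `σ`. -/
def StrictSchurConcave {d : ℕ} (φ : MState d → ℝ) : Prop :=
  ∀ ρ σ : MState d, Maj ρ σ → ¬ UnitarilyEquiv ρ σ → φ σ < φ ρ

/-- `φ` is strictly concave on the convex set of states. -/
def StrictConcaveOnStates {d : ℕ} (φ : MState d → ℝ) : Prop :=
  ∀ (ρ σ τ : MState d) (t : ℝ), 0 < t → t < 1 → ρ.1 ≠ σ.1 →
    τ.1 = t • ρ.1 + (1 - t) • σ.1 → t * φ ρ + (1 - t) * φ σ < φ τ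
namespace TNormAux
open Matrix

variable {d : ℕ}

lemma trace_nonneg' {M : Matrix (Fin d) (Fin d) ℂ} (hM : M.PosSemidef) : 0 ≤ M.trace := by
  have h : ∀ i, 0 ≤ M i i := fun i => by
    have := hM.dotProduct_mulVec_nonneg (Pi.single i 1)
    simpa [dotProduct, mulVec, Pi.single_apply] using this
  exact Finset.sum_nonneg fun i _ => h i

open scoped MatrixOrder in
lemma trace_mul_nonneg {M N : Matrix (Fin d) (Fin d) ℂ}
    (hM : M.PosSemidef) (hN : N.PosSemidef) : 0 ≤ (M * N).trace := by
  have h1 : M = CFC.sqrt M * CFC.sqrt M := (CFC.sqrt_mul_sqrt_self M hM.nonneg).symm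
  have h2 : (M * N).trace = (CFC.sqrt M * N * CFC.sqrt M).trace := by
    rw [trace_mul_cycle (CFC.sqrt M) N (CFC.sqrt M), ← h1]
  rw [h2]
  have : (CFC.sqrt M * N * (CFC.sqrt M)ᴴ).PosSemidef := hN.mul_mul_conjTranspose_same (CFC.sqrt M)
  rw [(CFC.sqrt_nonneg M).posSemidef.isHermitian.eq] at this
  exact trace_nonneg' this

lemma smul_posSemidef {M : Matrix (Fin d) (Fin d) ℂ} (hM : M.PosSemidef) {c : ℝ} (hc : 0 ≤ c) :
    (c • M).PosSemidef := by
  have hcc : c • M = (c : ℂ) • M := by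
    ext i j; simp [Matrix.smul_apply, Complex.real_smul]
  rw [hcc]
  constructor
  · rw [IsHermitian, conjTranspose_smul, hM.isHermitian.eq]
    congr 1
    simp
  · exact (hM.smul (a := (c : ℂ)) (by exact_mod_cast hc)).2


lemma eigs_of_hermitian {A : Matrix (Fin d) (Fin d) ℂ} (hA : A.IsHermitian) :
    eigs A = hA.eigenvalues := dif_pos hA

lemma trace_conj (U : Matrix.unitaryGroup (Fin d) ℂ) (D : Matrix (Fin d) (Fin d) ℂ) :
    ((U : Matrix (Fin d) (Fin d) ℂ) * D * star (U : Matrix (Fin d) (Fin d) ℂ)).trace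
      = D.trace := by
  rw [trace_mul_cycle, Matrix.UnitaryGroup.star_mul_self, one_mul]

lemma conj_posSemidef (U : Matrix.unitaryGroup (Fin d) ℂ) {D : Matrix (Fin d) (Fin d) ℂ}
    (hD : D.PosSemidef) :
    ((U : Matrix (Fin d) (Fin d) ℂ) * D * star (U : Matrix (Fin d) (Fin d) ℂ)).PosSemidef := by
  have := hD.mul_mul_conjTranspose_same (U : Matrix (Fin d) (Fin d) ℂ)
  simpa [Matrix.star_eq_conjTranspose] using this

lemma exists_decomp {A : Matrix (Fin d) (Fin d) ℂ} (hA : A.IsHermitian) :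
    ∃ P Q : Matrix (Fin d) (Fin d) ℂ, P.PosSemidef ∧ Q.PosSemidef ∧ A = P - Q ∧
      P.trace + Q.trace = ((traceNorm A : ℝ) : ℂ) := by
  set U := hA.eigenvectorUnitary with hU
  set lam := hA.eigenvalues with hlam
  set UC : Matrix (Fin d) (Fin d) ℂ := (U : Matrix (Fin d) (Fin d) ℂ) with hUC
  refine ⟨UC * diagonal (fun i => ((max (lam i) 0 : ℝ) : ℂ)) * star UC,
          UC * diagonal (fun i => ((max (-(lam i)) 0 : ℝ) : ℂ)) * star UC, ?_, ?_, ?_, ?_⟩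
  · exact conj_posSemidef U (Matrix.posSemidef_diagonal_iff.mpr fun i => by
      exact_mod_cast le_max_right (lam i) 0)
  · exact conj_posSemidef U (Matrix.posSemidef_diagonal_iff.mpr fun i => by
      exact_mod_cast le_max_right (-(lam i)) 0)
  · have hsub : UC * diagonal (fun i => ((max (lam i) 0 : ℝ) : ℂ)) * star UC
        - UC * diagonal (fun i => ((max (-(lam i)) 0 : ℝ) : ℂ)) * star UC
        = UC * (diagonal (fun i => ((max (lam i) 0 : ℝ) : ℂ))
            - diagonal (fun i => ((max (-(lam i)) 0 : ℝ) : ℂ))) * star UC := by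
      rw [Matrix.mul_sub, Matrix.sub_mul]
    rw [hsub, Matrix.diagonal_sub]
    have hdiag : (fun i => ((max (lam i) 0 : ℝ) : ℂ) - ((max (-(lam i)) 0 : ℝ) : ℂ))
        = fun i => ((lam i : ℝ) : ℂ) := by
      funext i
      rw [← Complex.ofReal_sub]
      congr 1
      rcases le_or_gt 0 (lam i) with h | h
      · rw [max_eq_left h, max_eq_right (by linarith), sub_zero]
      · rw [max_eq_right h.le, max_eq_left (by linarith), zero_sub, neg_neg]
    rw [hdiag]
    exact hA.spectral_theorem
  · rw [trace_conj, trace_conj, trace_diagonal, trace_diagonal, ← Finset.sum_add_distrib]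
    unfold traceNorm
    rw [eigs_of_hermitian hA]
    push_cast
    congr 1
    funext i
    rw [← Complex.ofReal_add]
    congr 1
    rcases le_or_gt 0 (lam i) with h | h
    · rw [max_eq_left h, max_eq_right (by linarith), add_zero, abs_of_nonneg h]
    · rw [max_eq_right h.le, max_eq_left (by linarith), zero_add, abs_of_neg h]


lemma traceNorm_le_decomp {A P Q : Matrix (Fin d) (Fin d) ℂ}
    (hP : P.PosSemidef) (hQ : Q.PosSemidef) (hAPQ : A = P - Q) :
    ((traceNorm A : ℝ) : ℂ) ≤ P.trace + Q.trace := by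
  have hA : A.IsHermitian := by
    rw [hAPQ]; exact hP.isHermitian.sub hQ.isHermitian
  set U := hA.eigenvectorUnitary with hU
  set lam := hA.eigenvalues with hlam
  set UC : Matrix (Fin d) (Fin d) ℂ := (U : Matrix (Fin d) (Fin d) ℂ) with hUC
  set s : Fin d → ℝ := fun i => if 0 ≤ lam i then 1 else -1 with hs
  set S : Matrix (Fin d) (Fin d) ℂ := UC * diagonal (fun i => ((s i : ℝ) : ℂ)) * star UC with hS
  -- 1 - S and 1 + S are PSD
  have hUCU : UC * star UC = 1 := U.2.2
  have hone : UC * (1 : Matrix (Fin d) (Fin d) ℂ) * star UC = 1 := by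
    rw [Matrix.mul_one, hUCU]
  have honeS : (1 : Matrix (Fin d) (Fin d) ℂ) - S
      = UC * (diagonal (fun i => ((1 - s i : ℝ) : ℂ))) * star UC := by
    have : diagonal (fun i => ((1 - s i : ℝ) : ℂ))
        = (1 : Matrix (Fin d) (Fin d) ℂ) - diagonal (fun i => ((s i : ℝ) : ℂ)) := by
      rw [← Matrix.diagonal_one, Matrix.diagonal_sub]
      congr 1; funext i; push_cast; ring
    rw [this, Matrix.mul_sub, Matrix.sub_mul, hone]
  have honeS' : (1 : Matrix (Fin d) (Fin d) ℂ) + S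
      = UC * (diagonal (fun i => ((1 + s i : ℝ) : ℂ))) * star UC := by
    have : diagonal (fun i => ((1 + s i : ℝ) : ℂ))
        = (1 : Matrix (Fin d) (Fin d) ℂ) + diagonal (fun i => ((s i : ℝ) : ℂ)) := by
      rw [← Matrix.diagonal_one, Matrix.diagonal_add]
      congr 1; funext i; push_cast; ring
    rw [this, Matrix.mul_add, Matrix.add_mul, hone]
  have hs1 : ∀ i, |s i| ≤ 1 := by
    intro i; rw [hs]; dsimp only; split <;> simp
  have hSm : ((1 : Matrix (Fin d) (Fin d) ℂ) - S).PosSemidef := by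
    rw [honeS]
    exact conj_posSemidef U (Matrix.posSemidef_diagonal_iff.mpr fun i => by
      have := abs_le.mp (hs1 i)
      exact_mod_cast (by linarith [this.2] : (0:ℝ) ≤ 1 - s i))
  have hSp : ((1 : Matrix (Fin d) (Fin d) ℂ) + S).PosSemidef := by
    rw [honeS']
    exact conj_posSemidef U (Matrix.posSemidef_diagonal_iff.mpr fun i => by
      have := abs_le.mp (hs1 i)
      exact_mod_cast (by linarith [this.1] : (0:ℝ) ≤ 1 + s i))
  -- trace (A * S) = traceNorm A
  have hAS : (A * S).trace = ((traceNorm A : ℝ) : ℂ) := by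
    have hAspec : A = UC * diagonal (fun i => ((lam i : ℝ) : ℂ)) * star UC :=
      hA.spectral_theorem
    have hmul : A * S = UC * diagonal (fun i => ((lam i * s i : ℝ) : ℂ)) * star UC := by
      rw [hAspec, hS]
      have hstarU : star UC * UC = 1 := Matrix.UnitaryGroup.star_mul_self U
      calc UC * diagonal (fun i => ((lam i : ℝ) : ℂ)) * star UC *
            (UC * diagonal (fun i => ((s i : ℝ) : ℂ)) * star UC)
          = UC * (diagonal (fun i => ((lam i : ℝ) : ℂ)) * (star UC * UC) *
              diagonal (fun i => ((s i : ℝ) : ℂ))) * star UC := by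
            simp only [Matrix.mul_assoc]
        _ = UC * (diagonal (fun i => ((lam i : ℝ) : ℂ)) *
              diagonal (fun i => ((s i : ℝ) : ℂ))) * star UC := by
            rw [hstarU, Matrix.mul_one]
        _ = UC * diagonal (fun i => ((lam i * s i : ℝ) : ℂ)) * star UC := by
            rw [Matrix.diagonal_mul_diagonal]
            congr 2; funext i; push_cast; ring
    rw [hmul, trace_conj U, trace_diagonal]
    unfold traceNorm
    rw [eigs_of_hermitian hA]
    push_cast
    congr 1; funext i
    congr 1
    rw [hs]; dsimp only
    split
    · rename_i h; rw [abs_of_nonneg h]; push_cast; ring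
    · rename_i h; rw [abs_of_neg (lt_of_not_ge h)]; push_cast; ring
  -- trace (P * S) ≤ trace P and -(trace Q) ≤ trace (Q * S)
  have hPS : (P * S).trace ≤ P.trace := by
    have h0 : 0 ≤ (P * ((1 : Matrix (Fin d) (Fin d) ℂ) - S)).trace :=
      trace_mul_nonneg hP hSm
    rw [Matrix.mul_sub, Matrix.mul_one, trace_sub] at h0
    exact sub_nonneg.mp h0
  have hQS : -(Q.trace) ≤ (Q * S).trace := by
    have h0 : 0 ≤ (Q * ((1 : Matrix (Fin d) (Fin d) ℂ) + S)).trace :=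
      trace_mul_nonneg hQ hSp
    rw [Matrix.mul_add, Matrix.mul_one, trace_add] at h0
    rw [← sub_nonneg, sub_neg_eq_add, add_comm]
    exact h0
  have hsplit : (A * S).trace = (P * S).trace - (Q * S).trace := by
    rw [hAPQ, Matrix.sub_mul, trace_sub]
  rw [← hAS, hsplit, sub_eq_add_neg]
  exact add_le_add hPS (neg_le.mp hQS)


lemma traceNorm_convex {X Y : Matrix (Fin d) (Fin d) ℂ} (hX : X.IsHermitian) (hY : Y.IsHermitian)
    {t : ℝ} (ht0 : 0 ≤ t) (ht1 : t ≤ 1) :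
    traceNorm (t • X + (1 - t) • Y) ≤ t * traceNorm X + (1 - t) * traceNorm Y := by
  obtain ⟨P, Q, hP, hQ, hXPQ, hXtr⟩ := exists_decomp hX
  obtain ⟨P', Q', hP', hQ', hYPQ, hYtr⟩ := exists_decomp hY
  have hdec : t • X + (1 - t) • Y = (t • P + (1 - t) • P') - (t • Q + (1 - t) • Q') := by
    rw [hXPQ, hYPQ]
    module
  have hle := traceNorm_le_decomp
    ((smul_posSemidef hP ht0).add (smul_posSemidef hP' (by linarith)))
    ((smul_posSemidef hQ ht0).add (smul_posSemidef hQ' (by linarith))) hdec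
  have htr : (t • P + (1 - t) • P').trace + (t • Q + (1 - t) • Q').trace
      = ((t * traceNorm X + (1 - t) * traceNorm Y : ℝ) : ℂ) := by
    rw [trace_add, trace_add, trace_smul, trace_smul, trace_smul, trace_smul]
    have e1 : t • P.trace + (1 - t) • P'.trace + (t • Q.trace + (1 - t) • Q'.trace)
        = (t : ℂ) * (P.trace + Q.trace) + ((1 - t : ℝ) : ℂ) * (P'.trace + Q'.trace) := by
      rw [Complex.real_smul, Complex.real_smul, Complex.real_smul, Complex.real_smul]
      push_cast
      ring
    rw [e1, hXtr, hYtr]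
    push_cast
    ring
  rw [htr] at hle
  exact_mod_cast hle


lemma unitarilyEquiv_symm {ρ σ : MState d} (h : UnitarilyEquiv ρ σ) : UnitarilyEquiv σ ρ := by
  obtain ⟨π, hπ⟩ := h
  refine ⟨π.symm, funext fun i => ?_⟩
  have h1 := congrFun hπ (π.symm i)
  simp only [Function.comp_apply, Equiv.apply_symm_apply] at h1
  exact h1.symm

end TNormAux

open TNormAux in
/-- `ρ*_ε(σ)` maximizes and `ρ_{*,ε}(σ)` minimizes any Schur concave `φ`
over `B_ε(σ)`; for strictly Schur concave `φ` all maximizers (resp. minimizers) are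
unitarily equivalent to `ρ*_ε(σ)` (resp. `ρ_{*,ε}(σ)`); if `φ` is in addition strictly
concave then `ρ*_ε(σ)` is the unique maximizer. -/
theorem schurConcave_max_min_on_ball
    {d : ℕ} (hd : 1 ≤ d) (σ : MState d) (ε : ℝ) (hε : ε ∈ Set.Ioc (0 : ℝ) 1)
    (ρstar ρlow : MState d)
    (hρstar : inBall ε σ ρstar ∧ ∀ ω : MState d, inBall ε σ ω → Maj ρstar ω)
    (hρlow : inBall ε σ ρlow ∧ ∀ ω : MState d, inBall ε σ ω → Maj ω ρlow)
    (φ : MState d → ℝ) (hφ : SchurConcave φ) :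
    (∀ ω : MState d, inBall ε σ ω → φ ω ≤ φ ρstar) ∧
    (∀ ω : MState d, inBall ε σ ω → φ ρlow ≤ φ ω) ∧
    (StrictSchurConcave φ →
      (∀ ω : MState d, inBall ε σ ω →
        (∀ ω' : MState d, inBall ε σ ω' → φ ω' ≤ φ ω) → UnitarilyEquiv ω ρstar) ∧
      (∀ ω : MState d, inBall ε σ ω →
        (∀ ω' : MState d, inBall ε σ ω' → φ ω ≤ φ ω') → UnitarilyEquiv ω ρlow)) ∧
    (StrictSchurConcave φ → StrictConcaveOnStates φ →
      ∀ ω : MState d, inBall ε σ ω →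
        (∀ ω' : MState d, inBall ε σ ω' → φ ω' ≤ φ ω) → ω = ρstar) := by
  obtain ⟨hbs, hms⟩ := hρstar
  obtain ⟨hbl, hml⟩ := hρlow
  have part1 : ∀ ω : MState d, inBall ε σ ω → φ ω ≤ φ ρstar :=
    fun ω hω => hφ _ _ (hms ω hω)
  refine ⟨part1, fun ω hω => hφ _ _ (hml ω hω), ?_, ?_⟩
  · intro hstrict
    constructor
    · intro ω hω hmax
      by_contra hne
      have hne' : ¬ UnitarilyEquiv ρstar ω := fun h => hne (unitarilyEquiv_symm h)
      exact absurd (hmax ρstar hbs) (not_le.mpr (hstrict ρstar ω (hms ω hω) hne'))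
    · intro ω hω hmin
      by_contra hne
      exact absurd (hmin ρlow hbl) (not_le.mpr (hstrict ω ρlow (hml ω hω) hne))
  · intro hstrict hconc ω hω hmax
    by_contra hne
    have hne1 : ω.1 ≠ ρstar.1 := fun h => hne (Subtype.ext h)
    have hφeq : φ ω = φ ρstar := le_antisymm (part1 ω hω) (hmax ρstar hbs)
    -- construct the midpoint state
    have hpsd : ((1/2 : ℝ) • ω.1 + (1 - (1/2 : ℝ)) • ρstar.1).PosSemidef :=
      (smul_posSemidef ω.2.1 (by norm_num)).add (smul_posSemidef ρstar.2.1 (by norm_num))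
    have htr : ((1/2 : ℝ) • ω.1 + (1 - (1/2 : ℝ)) • ρstar.1).trace = 1 := by
      rw [Matrix.trace_add, Matrix.trace_smul, Matrix.trace_smul, ω.2.2, ρstar.2.2]
      rw [Complex.real_smul, Complex.real_smul]
      norm_num
    set τ : MState d := ⟨(1/2 : ℝ) • ω.1 + (1 - (1/2 : ℝ)) • ρstar.1, hpsd, htr⟩ with hτ
    have hτball : inBall ε σ τ := by
      unfold inBall at *
      have hXH : (ω.1 - σ.1).IsHermitian := ω.2.1.1.sub σ.2.1.1
      have hYH : (ρstar.1 - σ.1).IsHermitian := ρstar.2.1.1.sub σ.2.1.1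
      have hdiff : τ.1 - σ.1 = (1/2 : ℝ) • (ω.1 - σ.1) + (1 - (1/2 : ℝ)) • (ρstar.1 - σ.1) := by
        rw [hτ]
        show (1/2 : ℝ) • ω.1 + (1 - (1/2 : ℝ)) • ρstar.1 - σ.1 = _
        module
      rw [hdiff]
      have hcv := traceNorm_convex hXH hYH (t := 1/2) (by norm_num) (by norm_num)
      linarith [hbs, hω, hcv]
    have hlt := hconc ω ρstar τ (1/2) (by norm_num) (by norm_num) hne1 rfl
    have hτle : φ τ ≤ φ ω := hmax τ hτball
    rw [hφeq] at hlt
    linarith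
end
end

section
/- Let d ≥ 1, σ a state on ℂ^d and ε ∈ (0,1]. Then for every state ω ∈ B_ε(σ): S(ρ_{*,ε}(σ)) ≤ S(ω) ≤ S(ρ*_ε(σ)), and consequently |S(ω) − S(σ)| ≤ max{ S(ρ*_ε(σ)) − S(σ), S(σ) − S(ρ_{*,ε}(σ)) }. -/
open scoped BigOperators ComplexOrder

noncomputable section

/-! ### Auxiliary lemmas -/

open Finset

lemma sm_le' {k d : ℕ} (f : Fin k → Fin d) (hf : StrictMono f) :
    ∀ j : Fin k, (j : ℕ) ≤ (f j : ℕ) := by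
  have H : ∀ n, ∀ j : Fin k, (j : ℕ) = n → n ≤ (f j : ℕ) := by
    intro n
    induction n with
    | zero => intro j _; exact Nat.zero_le _
    | succ n ih =>
      intro j hj
      have hn : n < k := by omega
      have h1 := ih ⟨n, hn⟩ rfl
      have h2 : f ⟨n, hn⟩ < f j := hf (by simp [Fin.lt_def, hj])
      have := Fin.lt_def.mp h2
      omega
  exact fun j => H _ j rfl

lemma sum_le_topk' {d k : ℕ} (hk : k ≤ d) (w : Fin d → ℝ) (hw : Antitone w)
    (t : Finset (Fin d)) (ht : t.card = k) :
    ∑ i ∈ t, w i ≤ ∑ j : Fin k, w (Fin.castLE hk j) := by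
  have hmem : Finset.univ.map (t.orderEmbOfFin ht).toEmbedding ⊆ t := by
    intro i hi
    rcases Finset.mem_map.mp hi with ⟨j, _, rfl⟩
    exact t.orderEmbOfFin_mem ht j
  have hcard : t.card ≤ (Finset.univ.map (t.orderEmbOfFin ht).toEmbedding).card := by
    rw [Finset.card_map, Finset.card_univ, Fintype.card_fin, ht]
  have heq := Finset.eq_of_subset_of_card_le hmem hcard
  rw [← heq, Finset.sum_map]
  apply Finset.sum_le_sum
  intro j _
  apply hw
  have := sm_le' _ (t.orderEmbOfFin ht).strictMono j
  exact Fin.le_def.mpr (by simpa using this)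

/-- The antitone (decreasing) rearrangement of a vector. -/
noncomputable def sortd {d : ℕ} (v : Fin d → ℝ) : Fin d → ℝ :=
  fun i => v (Tuple.sort v (Fin.rev i))

lemma sortd_antitone {d : ℕ} (v : Fin d → ℝ) : Antitone (sortd v) := by
  intro i j hij
  exact Tuple.monotone_sort v (Fin.rev_le_rev.mpr hij)

lemma kMaxSum_eq_sortd {d : ℕ} (v : Fin d → ℝ) {k : ℕ} (hk : k ≤ d) :
    kMaxSum v k = ∑ j : Fin k, sortd v (Fin.castLE hk j) := by
  set π : Equiv.Perm (Fin d) := Fin.revPerm.trans (Tuple.sort v) with hπ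
  have hvs : ∀ i, sortd v i = v (π i) := fun i => rfl
  set S := ((fun s : Finset (Fin d) => ∑ i ∈ s, v i) '' {s | s.card = k}) with hS
  have hfin : S.Finite := Set.Finite.image _ (Set.toFinite _)
  have hwit : (Finset.univ.map (Fin.castLEEmb hk)).image π ∈ {s : Finset (Fin d) | s.card = k} := by
    simp [Finset.card_image_of_injective _ π.injective]
  have hne : S.Nonempty := ⟨_, Set.mem_image_of_mem _ hwit⟩
  apply le_antisymm
  · apply csSup_le hne
    rintro b ⟨s, hs, rfl⟩
    have : ∑ i ∈ s, v i = ∑ j ∈ s.image π.symm, sortd v j := by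
      rw [Finset.sum_image (fun a _ b _ h => π.symm.injective h)]
      exact Finset.sum_congr rfl fun i _ => by rw [hvs, Equiv.apply_symm_apply]
    show ∑ i ∈ s, v i ≤ _
    rw [this]
    exact sum_le_topk' hk _ (sortd_antitone v) _
      (by rw [Finset.card_image_of_injective _ π.symm.injective]; exact hs)
  · apply le_csSup hfin.bddAbove
    refine ⟨_, hwit, ?_⟩
    show ∑ i ∈ _, v i = _
    rw [Finset.sum_image (fun a _ b _ h => π.injective h), Finset.sum_map]
    exact Finset.sum_congr rfl fun j _ => (hvs _).symm

lemma abel_ineq' (c a : ℕ → ℝ) : ∀ n : ℕ,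
    (∀ i j, i ≤ j → j ≤ n → c j ≤ c i) →
    (∀ k, k ≤ n → 0 ≤ ∑ i ∈ range k, a i) →
    c n * ∑ i ∈ range n, a i ≤ ∑ i ∈ range n, c i * a i := by
  intro n
  induction n with
  | zero => simp
  | succ n ih =>
    intro hc hS
    have h1 := ih (fun i j hij hj => hc i j hij (hj.trans (Nat.le_succ n)))
      (fun k hk => hS k (hk.trans (Nat.le_succ n)))
    rw [Finset.sum_range_succ, Finset.sum_range_succ]
    have h2 : c (n+1) * ∑ i ∈ range n, a i + c (n+1) * a n ≤
        c n * ∑ i ∈ range n, a i + c n * a n := by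
      have := hS (n+1) le_rfl
      rw [Finset.sum_range_succ] at this
      nlinarith [hc n (n+1) (Nat.le_succ n) le_rfl]
    calc c (n+1) * (∑ i ∈ range n, a i + a n)
        = c (n+1) * ∑ i ∈ range n, a i + c (n+1) * a n := by ring
      _ ≤ c n * ∑ i ∈ range n, a i + c n * a n := h2
      _ ≤ (∑ i ∈ range n, c i * a i) + c n * a n := by linarith

lemma gibbs' (a b : ℝ) (ha : 0 < a) (hb : 0 ≤ b) :
    (Real.log a + 1) * (b - a) ≤ b * Real.log b - a * Real.log a := by
  rcases eq_or_lt_of_le hb with h | hb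
  · simp [← h]; nlinarith
  · have h1 : Real.log (a / b) ≤ a / b - 1 := Real.log_le_sub_one_of_pos (by positivity)
    rw [Real.log_div (ne_of_gt ha) (ne_of_gt hb)] at h1
    have h2 : b * (Real.log a - Real.log b) ≤ a - b := by
      have := mul_le_mul_of_nonneg_left h1 hb.le
      calc b * (Real.log a - Real.log b) ≤ b * (a/b - 1) := this
        _ = a - b := by field_simp
    nlinarith

lemma main_nat' (d : ℕ) (x y : ℕ → ℝ)
    (hx0 : ∀ i, 0 ≤ x i) (hy0 : ∀ i, 0 ≤ y i)
    (hxa : ∀ i j, i ≤ j → j < d → x j ≤ x i)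
    (hpre : ∀ k, k ≤ d → ∑ i ∈ range k, x i ≤ ∑ i ∈ range k, y i)
    (htot : ∑ i ∈ range d, x i = ∑ i ∈ range d, y i) :
    ∑ i ∈ range d, x i * Real.log (x i) ≤ ∑ i ∈ range d, y i * Real.log (y i) := by
  set m := ((range d).filter (fun i => 0 < x i)).card with hm
  have hmd : m ≤ d := le_trans (Finset.card_filter_le _ _) (by simp)
  have hpos : ∀ i, i < m → 0 < x i := by
    intro i him
    by_contra hno
    have hxi : x i = 0 := le_antisymm (not_lt.mp hno) (hx0 i)
    have hsub : (range d).filter (fun i => 0 < x i) ⊆ range i := by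
      intro j hj
      rw [Finset.mem_filter, Finset.mem_range] at hj
      rw [Finset.mem_range]
      by_contra hji
      have : x j ≤ x i := hxa i j (not_lt.mp hji) hj.1
      rw [hxi] at this
      exact absurd (lt_of_lt_of_le hj.2 this) (lt_irrefl 0)
    have := Finset.card_le_card hsub
    rw [Finset.card_range] at this
    omega
  have hzero : ∀ i, m ≤ i → i < d → x i = 0 := by
    intro i hmi hid
    by_contra hno
    have hxi : 0 < x i := lt_of_le_of_ne (hx0 i) (Ne.symm hno)
    have hsub : range (i+1) ⊆ (range d).filter (fun i => 0 < x i) := by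
      intro j hj
      rw [Finset.mem_range] at hj
      rw [Finset.mem_filter, Finset.mem_range]
      exact ⟨by omega, lt_of_lt_of_le hxi (hxa j i (by omega) hid)⟩
    have := Finset.card_le_card hsub
    rw [Finset.card_range] at this
    omega
  have hsplit : ∀ f : ℕ → ℝ,
      ∑ i ∈ range d, f i = ∑ i ∈ range m, f i + ∑ i ∈ Finset.Ico m d, f i := by
    intro f
    rw [Finset.range_eq_Ico, ← Finset.sum_Ico_consecutive f (Nat.zero_le m) hmd, ← Finset.range_eq_Ico]
  have hsplitx : ∑ i ∈ range d, x i = ∑ i ∈ range m, x i := by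
    have h0 : ∑ i ∈ Finset.Ico m d, x i = 0 := Finset.sum_eq_zero (fun i hi => by
      rw [Finset.mem_Ico] at hi; exact hzero i hi.1 hi.2)
    rw [hsplit x, h0, add_zero]
  have hytail0 : ∑ i ∈ Finset.Ico m d, y i = 0 := by
    have hsplity := hsplit y
    have h1 : ∑ i ∈ range m, x i ≤ ∑ i ∈ range m, y i := hpre m hmd
    have h2 : ∑ i ∈ Finset.Ico m d, y i ≤ 0 := by
      rw [hsplitx, hsplity] at htot; linarith
    exact le_antisymm h2 (Finset.sum_nonneg fun i _ => hy0 i)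
  have hyz : ∀ i, m ≤ i → i < d → y i = 0 := by
    intro i h1 h2
    exact (Finset.sum_eq_zero_iff_of_nonneg (fun i _ => hy0 i)).mp hytail0 i
      (Finset.mem_Ico.mpr ⟨h1, h2⟩)
  have hSm : ∑ i ∈ range m, y i = ∑ i ∈ range m, x i := by
    have hsplity := hsplit y
    rw [hytail0, add_zero] at hsplity
    rw [← hsplity, ← htot, hsplitx]
  have hredx : ∑ i ∈ range d, x i * Real.log (x i) = ∑ i ∈ range m, x i * Real.log (x i) := by
    have h0 : ∑ i ∈ Finset.Ico m d, x i * Real.log (x i) = 0 := Finset.sum_eq_zero (fun i hi => by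
      rw [Finset.mem_Ico] at hi; rw [hzero i hi.1 hi.2, zero_mul])
    rw [hsplit fun i => x i * Real.log (x i), h0, add_zero]
  have hredy : ∑ i ∈ range d, y i * Real.log (y i) = ∑ i ∈ range m, y i * Real.log (y i) := by
    have h0 : ∑ i ∈ Finset.Ico m d, y i * Real.log (y i) = 0 := Finset.sum_eq_zero (fun i hi => by
      rw [Finset.mem_Ico] at hi; rw [hyz i hi.1 hi.2, zero_mul])
    rw [hsplit fun i => y i * Real.log (y i), h0, add_zero]
  rw [hredx, hredy]
  rcases Nat.eq_zero_or_pos m with hm0 | hm1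
  · simp [hm0]
  set c : ℕ → ℝ := fun i => Real.log (x (min i (m-1))) + 1 with hc
  set a : ℕ → ℝ := fun i => y i - x i with ha
  have hcanti : ∀ i j, i ≤ j → j ≤ m → c j ≤ c i := by
    intro i j hij hjm
    have h1 : min i (m-1) ≤ min j (m-1) := by omega
    have h2 : min j (m-1) < d := by omega
    have h3 : 0 < x (min j (m-1)) := hpos _ (by omega)
    have := Real.log_le_log h3 (hxa _ _ h1 h2)
    simp only [hc]
    linarith
  have hSk : ∀ k, k ≤ m → 0 ≤ ∑ i ∈ range k, a i := by
    intro k hk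
    simp only [ha, Finset.sum_sub_distrib]
    have := hpre k (hk.trans hmd)
    linarith
  have habel := abel_ineq' c a m hcanti hSk
  have hSm0 : ∑ i ∈ range m, a i = 0 := by
    simp only [ha, Finset.sum_sub_distrib]
    rw [hSm]; ring
  rw [hSm0, mul_zero] at habel
  have hpair : ∀ i ∈ range m, c i * a i ≤ y i * Real.log (y i) - x i * Real.log (x i) := by
    intro i hi
    rw [Finset.mem_range] at hi
    have hmini : min i (m-1) = i := by omega
    simp only [hc, ha, hmini]
    exact gibbs' (x i) (y i) (hpos i hi) (hy0 i)
  have := Finset.sum_le_sum hpair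
  rw [Finset.sum_sub_distrib] at this
  linarith

lemma ent_vec {d : ℕ} (x y : Fin d → ℝ) (hx : ∀ i, 0 ≤ x i) (hy : ∀ i, 0 ≤ y i)
    (h : vMaj x y) :
    -∑ i, y i * Real.logb 2 (y i) ≤ -∑ i, x i * Real.logb 2 (x i) := by
  classical
  set x' : ℕ → ℝ := fun n => if hn : n < d then sortd x ⟨n, hn⟩ else 0 with hx'
  set y' : ℕ → ℝ := fun n => if hn : n < d then sortd y ⟨n, hn⟩ else 0 with hy'
  have hconv : ∀ (v : Fin d → ℝ) (k : ℕ) (hk : k ≤ d),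
      kMaxSum v k = ∑ n ∈ range k, (fun n => if hn : n < d then sortd v ⟨n, hn⟩ else 0) n := by
    intro v k hk
    rw [kMaxSum_eq_sortd v hk]
    rw [← Fin.sum_univ_eq_sum_range (fun n => if hn : n < d then sortd v ⟨n, hn⟩ else 0) k]
    apply Finset.sum_congr rfl
    intro j _
    rw [dif_pos (lt_of_lt_of_le j.isLt hk)]
    exact congrArg (sortd v) (Fin.ext rfl)
  have hperm : ∀ (v : Fin d → ℝ) (g : ℝ → ℝ),
      ∑ i, sortd v i * g (sortd v i) = ∑ i, v i * g (v i) := by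
    intro v g
    exact Equiv.sum_comp (Fin.revPerm.trans (Tuple.sort v)) (fun i => v i * g (v i))
  have hmain : ∑ n ∈ range d, x' n * Real.log (x' n) ≤ ∑ n ∈ range d, y' n * Real.log (y' n) := by
    apply main_nat' d x' y'
    · intro i
      simp only [hx']
      split
      · exact hx _
      · exact le_refl 0
    · intro i
      simp only [hy']
      split
      · exact hy _
      · exact le_refl 0
    · intro i j hij hjd
      simp only [hx', dif_pos hjd, dif_pos (lt_of_le_of_lt hij hjd)]
      exact sortd_antitone x (show (⟨i, _⟩ : Fin d) ≤ ⟨j, _⟩ from hij)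
    · intro k hk
      rcases Nat.eq_zero_or_pos k with h0 | h1
      · simp [h0]
      · rw [← hconv x k hk, ← hconv y k hk]
        exact h.1 k h1 hk
    · rw [← hconv x d le_rfl, ← hconv y d le_rfl]
      exact h.2
  have hfin : ∀ (v : Fin d → ℝ),
      ∑ i, v i * Real.logb 2 (v i) =
        (∑ n ∈ range d, (fun n => if hn : n < d then sortd v ⟨n, hn⟩ else 0) n *
          Real.log ((fun n => if hn : n < d then sortd v ⟨n, hn⟩ else 0) n)) / Real.log 2 := by
    intro v
    rw [← hperm v (Real.logb 2)]
    rw [← Fin.sum_univ_eq_sum_range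
      (fun n => (fun n => if hn : n < d then sortd v ⟨n, hn⟩ else 0) n *
        Real.log ((fun n => if hn : n < d then sortd v ⟨n, hn⟩ else 0) n)) d]
    rw [Finset.sum_div]
    apply Finset.sum_congr rfl
    intro j _
    show sortd v j * Real.logb 2 (sortd v j) =
      (if hn : (j:ℕ) < d then sortd v ⟨(j:ℕ), hn⟩ else 0) *
        Real.log (if hn : (j:ℕ) < d then sortd v ⟨(j:ℕ), hn⟩ else 0) / Real.log 2
    rw [dif_pos j.isLt, Fin.eta]
    simp only [Real.logb]
    ring
  have hlog2 : (0:ℝ) < Real.log 2 := Real.log_pos one_lt_two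
  have h1 : ∑ i, x i * Real.logb 2 (x i) ≤ ∑ i, y i * Real.logb 2 (y i) := by
    rw [hfin x, hfin y]
    exact div_le_div_of_nonneg_right hmain hlog2.le
  linarith

lemma vnEnt_le_of_Maj {d : ℕ} (ρ τ : MState d) (h : Maj ρ τ) : vnEnt τ ≤ vnEnt ρ := by
  have hnn : ∀ (μ : MState d) (i : Fin d), 0 ≤ eigs μ.1 i := by
    intro μ i
    have hH : μ.1.IsHermitian := μ.2.1.1
    rw [eigs, dif_pos hH]
    exact μ.2.1.eigenvalues_nonneg i
  exact ent_vec (eigs ρ.1) (eigs τ.1) (hnn ρ) (hnn τ) h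

/-- Local continuity bound for the von Neumann entropy: for every
`ω ∈ B_ε(σ)`, `S(ρ_{*,ε}(σ)) ≤ S(ω) ≤ S(ρ*_ε(σ))`, and hence
`|S(ω) − S(σ)| ≤ max { S(ρ*_ε(σ)) − S(σ), S(σ) − S(ρ_{*,ε}(σ)) }`. -/
theorem local_continuity_bound_vnEntropy
    {d : ℕ} (hd : 1 ≤ d) (σ : MState d) (ε : ℝ) (hε : ε ∈ Set.Ioc (0 : ℝ) 1)
    (ρstar ρlow : MState d)
    (hρstar : inBall ε σ ρstar ∧ ∀ ω : MState d, inBall ε σ ω → Maj ρstar ω)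
    (hρlow : inBall ε σ ρlow ∧ ∀ ω : MState d, inBall ε σ ω → Maj ω ρlow)
    (ω : MState d) (hω : inBall ε σ ω) :
    (vnEnt ρlow ≤ vnEnt ω ∧ vnEnt ω ≤ vnEnt ρstar) ∧
    |vnEnt ω - vnEnt σ| ≤ max (vnEnt ρstar - vnEnt σ) (vnEnt σ - vnEnt ρlow) := by
  have h1 : vnEnt ρlow ≤ vnEnt ω := vnEnt_le_of_Maj ω ρlow (hρlow.2 ω hω)
  have h2 : vnEnt ω ≤ vnEnt ρstar := vnEnt_le_of_Maj ρstar ω (hρstar.2 ω hω)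
  refine ⟨⟨h1, h2⟩, ?_⟩
  rw [abs_sub_le_iff]
  constructor
  · have := le_max_left (vnEnt ρstar - vnEnt σ) (vnEnt σ - vnEnt ρlow)
    linarith
  · have := le_max_right (vnEnt ρstar - vnEnt σ) (vnEnt σ - vnEnt ρlow)
    linarith
end
end

section
/- Let d ≥ 1, σ a state on ℂ^d, ε ∈ (0,1], and let τ := (1/d)·I be the completely mixed state. Then the majorization-minimal state ρ*_ε(σ) saturates the triangle inequality between σ and τ: (1/2)‖σ − τ‖₁ = (1/2)‖τ − ρ*_ε(σ)‖₁ + (1/2)‖ρ*_ε(σ) − σ‖₁. -/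
open scoped BigOperators ComplexOrder

noncomputable section

/-- `ρ` is the majorization-minimal state `ρ*_ε(σ)` of the ε-ball around `σ`:
`ρ ∈ B_ε(σ)` and `ρ ≺ ω` for every `ω ∈ B_ε(σ)`. -/
def IsMinState {d : ℕ} (ε : ℝ) (σ ρ : MState d) : Prop :=
  inBall ε σ ρ ∧ ∀ ω : MState d, inBall ε σ ω → Maj ρ ω

/-! ### Auxiliary lemmas -/

namespace TriangleAux

open Matrix Polynomial

variable {d : ℕ}

lemma eigs_of_herm {A : Matrix (Fin d) (Fin d) ℂ} (hA : A.IsHermitian) :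
    eigs A = hA.eigenvalues := by rw [eigs, dif_pos hA]

lemma charpoly_unitary_conj (U M : Matrix (Fin d) (Fin d) ℂ)
    (hU : U ∈ Matrix.unitaryGroup (Fin d) ℂ) :
    (U * M * star U).charpoly = M.charpoly := by
  have hU1 : U * star U = 1 := Matrix.mem_unitaryGroup_iff.mp hU
  have hmap : ∀ N P : Matrix (Fin d) (Fin d) ℂ,
      (C : ℂ →+* ℂ[X]).mapMatrix (N * P) =
        (C : ℂ →+* ℂ[X]).mapMatrix N * (C : ℂ →+* ℂ[X]).mapMatrix P := fun N P => map_mul _ N P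
  have hUU : (C : ℂ →+* ℂ[X]).mapMatrix U * (C : ℂ →+* ℂ[X]).mapMatrix (star U) = 1 := by
    rw [← hmap, hU1, _root_.map_one (RingHom.mapMatrix (C : ℂ →+* ℂ[X]))]
  have hc : ∀ N : Matrix (Fin d) (Fin d) ℂ[X],
      (Matrix.scalar (Fin d) (X : ℂ[X])) * N = N * Matrix.scalar (Fin d) X :=
    fun N => (Matrix.scalar_commute (X : ℂ[X]) (fun r => Commute.all _ r) N).eq
  have key : charmatrix (U * M * star U) =
      (C : ℂ →+* ℂ[X]).mapMatrix U * charmatrix M * (C : ℂ →+* ℂ[X]).mapMatrix (star U) := by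
    unfold charmatrix
    rw [mul_sub, sub_mul, hmap, hmap]
    congr 1
    rw [← hc, mul_assoc, hUU, mul_one]
  have h2 : ((C : ℂ →+* ℂ[X]).mapMatrix U).det * ((C : ℂ →+* ℂ[X]).mapMatrix (star U)).det = 1 := by
    rw [← det_mul, hUU, det_one]
  unfold Matrix.charpoly
  rw [key, det_mul, det_mul, mul_right_comm, h2, one_mul]

lemma charpoly_diag (w : Fin d → ℂ) :
    (Matrix.diagonal w).charpoly = ∏ i, (X - C (w i)) := by
  have h : charmatrix (Matrix.diagonal w) = Matrix.diagonal (fun i => X - C (w i)) := by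
    ext i j
    by_cases h : i = j
    · subst h; simp
    · simp [h, Matrix.diagonal_apply_ne _ h]
  rw [Matrix.charpoly, h, det_diagonal]

lemma eigs_multiset {A : Matrix (Fin d) (Fin d) ℂ} (U : Matrix (Fin d) (Fin d) ℂ)
    (hU : U ∈ Matrix.unitaryGroup (Fin d) ℂ) (v : Fin d → ℝ)
    (hAU : A = U * Matrix.diagonal (Complex.ofReal ∘ v) * star U) :
    Multiset.map (eigs A) Finset.univ.val = Multiset.map v Finset.univ.val := by
  have hdiag : (Matrix.diagonal (Complex.ofReal ∘ v)).IsHermitian := by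
    apply Matrix.isHermitian_diagonal_of_self_adjoint
    funext i
    simp [Function.comp, Complex.conj_ofReal]
  have hA : A.IsHermitian := by
    rw [hAU, Matrix.star_eq_conjTranspose]
    exact Matrix.isHermitian_mul_mul_conjTranspose U hdiag
  have hc1 : A.charpoly = ∏ i, (X - C ((v i : ℂ))) := by
    rw [hAU, charpoly_unitary_conj _ _ hU, charpoly_diag]
    rfl
  have hc2 : A.charpoly = ∏ i, (X - C ((hA.eigenvalues i : ℂ))) := by
    conv_lhs => rw [hA.spectral_theorem, Unitary.conjStarAlgAut_apply]
    rw [charpoly_unitary_conj _ _ (hA.eigenvectorUnitary).2, charpoly_diag]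
    rfl
  have hroots : Multiset.map (fun i => ((hA.eigenvalues i : ℝ) : ℂ)) Finset.univ.val
      = Multiset.map (fun i => ((v i : ℝ) : ℂ)) Finset.univ.val := by
    have e1 := hc2.symm.trans hc1
    rw [Finset.prod_eq_multiset_prod, Finset.prod_eq_multiset_prod] at e1
    have e2 := congrArg Polynomial.roots e1
    rwa [show (Multiset.map (fun i => X - C ((hA.eigenvalues i : ℂ))) Finset.univ.val)
        = Multiset.map (fun a : ℂ => X - C a)
            (Multiset.map (fun i => ((hA.eigenvalues i : ℝ) : ℂ)) Finset.univ.val) by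
          rw [Multiset.map_map]; rfl,
      show (Multiset.map (fun i => X - C ((v i : ℂ))) Finset.univ.val)
        = Multiset.map (fun a : ℂ => X - C a)
            (Multiset.map (fun i => ((v i : ℝ) : ℂ)) Finset.univ.val) by
          rw [Multiset.map_map]; rfl,
      Polynomial.roots_multiset_prod_X_sub_C, Polynomial.roots_multiset_prod_X_sub_C] at e2
  apply Multiset.map_injective (f := (Complex.ofReal : ℝ → ℂ)) Complex.ofReal_injective
  rw [Multiset.map_map, Multiset.map_map, eigs_of_herm hA]
  exact hroots

lemma ofReal_eq : (RCLike.ofReal : ℝ → ℂ) = Complex.ofReal := rfl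

/-- spectral theorem in our preferred form -/
lemma spectral {A : Matrix (Fin d) (Fin d) ℂ} (hA : A.IsHermitian) :
    A = (hA.eigenvectorUnitary : Matrix (Fin d) (Fin d) ℂ)
        * Matrix.diagonal (Complex.ofReal ∘ eigs A)
        * star (hA.eigenvectorUnitary : Matrix (Fin d) (Fin d) ℂ) := by
  rw [eigs_of_herm hA, ← ofReal_eq]
  exact hA.spectral_theorem

lemma sum_f_eigs_eq {A : Matrix (Fin d) (Fin d) ℂ} (U : Matrix (Fin d) (Fin d) ℂ)
    (hU : U ∈ Matrix.unitaryGroup (Fin d) ℂ) (v : Fin d → ℝ)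
    (hAU : A = U * Matrix.diagonal (Complex.ofReal ∘ v) * star U) (f : ℝ → ℝ) :
    ∑ i, f (eigs A i) = ∑ i, f (v i) := by
  have h := congrArg (fun m => (Multiset.map f m).sum) (eigs_multiset U hU v hAU)
  simpa [Multiset.map_map, Finset.sum, Function.comp_def] using h

lemma traceNorm_eq_of_conj {A : Matrix (Fin d) (Fin d) ℂ} (U : Matrix (Fin d) (Fin d) ℂ)
    (hU : U ∈ Matrix.unitaryGroup (Fin d) ℂ) (v : Fin d → ℝ)
    (hAU : A = U * Matrix.diagonal (Complex.ofReal ∘ v) * star U) :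
    traceNorm A = ∑ i, |v i| :=
  sum_f_eigs_eq U hU v hAU (fun x => |x|)

lemma smul_conj {A : Matrix (Fin d) (Fin d) ℂ} (hA : A.IsHermitian) (c : ℝ) :
    (c : ℂ) • A = (hA.eigenvectorUnitary : Matrix (Fin d) (Fin d) ℂ)
        * Matrix.diagonal (Complex.ofReal ∘ (c • eigs A))
        * star (hA.eigenvectorUnitary : Matrix (Fin d) (Fin d) ℂ) := by
  conv_lhs => rw [spectral hA]
  have hd : Matrix.diagonal (Complex.ofReal ∘ (c • eigs A)) =
      (c : ℂ) • Matrix.diagonal (Complex.ofReal ∘ eigs A) := by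
    rw [← Matrix.diagonal_smul]
    congr 1
    funext i
    simp [Pi.smul_apply, smul_eq_mul]
  rw [hd, Matrix.mul_smul, Matrix.smul_mul]

lemma traceNorm_smul {A : Matrix (Fin d) (Fin d) ℂ} (hA : A.IsHermitian) (c : ℝ) :
    traceNorm ((c : ℂ) • A) = |c| * traceNorm A := by
  rw [traceNorm_eq_of_conj _ (hA.eigenvectorUnitary).2 _ (smul_conj hA c)]
  rw [traceNorm, eigs_of_herm hA, Finset.mul_sum]
  refine Finset.sum_congr rfl fun i _ => ?_
  simp [abs_mul]

lemma traceNorm_neg {A : Matrix (Fin d) (Fin d) ℂ} (hA : A.IsHermitian) :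
    traceNorm (-A) = traceNorm A := by
  have h := traceNorm_smul hA (-1)
  simpa using h

lemma traceNorm_nonneg (A : Matrix (Fin d) (Fin d) ℂ) : 0 ≤ traceNorm A :=
  Finset.sum_nonneg fun i _ => abs_nonneg _

lemma trace_eq_sum_eigs {A : Matrix (Fin d) (Fin d) ℂ} (hA : A.IsHermitian) :
    A.trace = ∑ i, (eigs A i : ℂ) := by
  conv_lhs => rw [spectral hA]
  rw [Matrix.trace_mul_cycle]
  have h1 : star (hA.eigenvectorUnitary : Matrix (Fin d) (Fin d) ℂ)
      * (hA.eigenvectorUnitary : Matrix (Fin d) (Fin d) ℂ) = 1 :=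
    Matrix.mem_unitaryGroup_iff'.mp (hA.eigenvectorUnitary).2
  rw [h1, one_mul, Matrix.trace_diagonal]
  rfl

/-- sum of positive parts of eigenvalues -/
noncomputable def Spos (A : Matrix (Fin d) (Fin d) ℂ) : ℝ :=
  ∑ i, max (eigs A i) 0

lemma psd_diag_re {Q : Matrix (Fin d) (Fin d) ℂ} (hQ : Q.PosSemidef) (i : Fin d) :
    0 ≤ (Q i i).re := by
  have h := hQ.re_dotProduct_nonneg (Pi.single i 1)
  simpa [dotProduct, Matrix.mulVec_single, Pi.single_apply, Finset.sum_ite_eq,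
    apply_ite] using h

lemma trace_PQ_re_le {A P : Matrix (Fin d) (Fin d) ℂ} (hA : A.IsHermitian)
    (hP : P.PosSemidef) (hP1 : (1 - P).PosSemidef) :
    (P * A).trace.re ≤ Spos A := by
  set U : Matrix (Fin d) (Fin d) ℂ := (hA.eigenvectorUnitary : Matrix (Fin d) (Fin d) ℂ) with hUdef
  have hUmem := (hA.eigenvectorUnitary).2
  have hU1 : star U * U = 1 := Matrix.mem_unitaryGroup_iff'.mp hUmem
  set Q := star U * P * U with hQdef
  have hQ : Q.PosSemidef := by
    have := hP.conjTranspose_mul_mul_same (B := U)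
    rwa [← Matrix.star_eq_conjTranspose] at this
  have hQ1 : (1 - Q).PosSemidef := by
    have h2 := hP1.conjTranspose_mul_mul_same (B := U)
    rw [← Matrix.star_eq_conjTranspose] at h2
    have heq : star U * (1 - P) * U = 1 - Q := by
      rw [mul_sub, mul_one, sub_mul, hU1, hQdef]
    rwa [heq] at h2
  have htr : (P * A).trace = (Q * Matrix.diagonal (Complex.ofReal ∘ eigs A)).trace := by
    conv_lhs => rw [spectral hA]
    rw [hQdef]
    rw [show P * (U * Matrix.diagonal (Complex.ofReal ∘ eigs A) * star U)
        = (P * U * Matrix.diagonal (Complex.ofReal ∘ eigs A)) * star U by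
      rw [← mul_assoc, ← mul_assoc]]
    rw [Matrix.trace_mul_comm]
    rw [show star U * (P * U * Matrix.diagonal (Complex.ofReal ∘ eigs A))
        = (star U * P * U) * Matrix.diagonal (Complex.ofReal ∘ eigs A) by
      rw [← mul_assoc, ← mul_assoc]]
  rw [htr]
  have htr2 : (Q * Matrix.diagonal (Complex.ofReal ∘ eigs A)).trace
      = ∑ i, Q i i * (eigs A i : ℂ) := by
    rw [Matrix.trace]
    refine Finset.sum_congr rfl fun i _ => ?_
    rw [Matrix.diag_apply, Matrix.mul_diagonal]
    rfl
  rw [htr2, Complex.re_sum]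
  refine Finset.sum_le_sum fun i _ => ?_
  have h1 : (Q i i * (eigs A i : ℂ)).re = (Q i i).re * eigs A i := by
    simp [Complex.mul_re]
  rw [h1]
  have h2 : 0 ≤ (Q i i).re := psd_diag_re hQ i
  have h3 : (Q i i).re ≤ 1 := by
    have := psd_diag_re hQ1 i
    simp only [Matrix.sub_apply, Matrix.one_apply_eq, Complex.sub_re, Complex.one_re] at this
    linarith
  rcases le_or_gt (eigs A i) 0 with h | h
  · exact (mul_nonpos_of_nonneg_of_nonpos h2 h).trans (le_max_right _ _)
  · have : (Q i i).re * eigs A i ≤ 1 * eigs A i :=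
      mul_le_mul_of_nonneg_right h3 h.le
    rw [one_mul] at this
    exact this.trans (le_max_left _ _)

lemma exists_P {A : Matrix (Fin d) (Fin d) ℂ} (hA : A.IsHermitian) :
    ∃ P : Matrix (Fin d) (Fin d) ℂ, P.PosSemidef ∧ (1 - P).PosSemidef ∧
      (P * A).trace.re = Spos A := by
  classical
  set U : Matrix (Fin d) (Fin d) ℂ := (hA.eigenvectorUnitary : Matrix (Fin d) (Fin d) ℂ) with hUdef
  have hUmem := (hA.eigenvectorUnitary).2
  have hU1 : star U * U = 1 := Matrix.mem_unitaryGroup_iff'.mp hUmem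
  have hU1' : U * star U = 1 := Matrix.mem_unitaryGroup_iff.mp hUmem
  set χ : Fin d → ℂ := fun i => if 0 < eigs A i then 1 else 0 with hχ
  refine ⟨U * Matrix.diagonal χ * star U, ?_, ?_, ?_⟩
  · have hdiag : (Matrix.diagonal χ).PosSemidef := by
      apply Matrix.PosSemidef.diagonal
      intro i
      dsimp [χ]
      split <;> simp
    have := hdiag.mul_mul_conjTranspose_same (B := U)
    rwa [← Matrix.star_eq_conjTranspose] at this
  · have hdiag : (Matrix.diagonal (fun i => 1 - χ i)).PosSemidef := by
      apply Matrix.PosSemidef.diagonal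
      intro i
      dsimp [χ]
      split <;> simp
    have h2 := hdiag.mul_mul_conjTranspose_same (B := U)
    rw [← Matrix.star_eq_conjTranspose] at h2
    have heq : U * Matrix.diagonal (fun i => 1 - χ i) * star U
        = 1 - U * Matrix.diagonal χ * star U := by
      have : Matrix.diagonal (fun i => 1 - χ i)
          = 1 - Matrix.diagonal χ := by
        rw [← Matrix.diagonal_one, Matrix.diagonal_sub]
      rw [this, mul_sub, sub_mul, mul_one, hU1']
    rwa [heq] at h2
  · conv_lhs => rw [spectral hA]
    rw [show U * Matrix.diagonal χ * star U
          * (U * Matrix.diagonal (Complex.ofReal ∘ eigs A) * star U)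
        = U * Matrix.diagonal χ * (star U * U) * Matrix.diagonal (Complex.ofReal ∘ eigs A)
          * star U by
      rw [← mul_assoc, ← mul_assoc, ← mul_assoc]]
    rw [hU1, mul_one, Matrix.trace_mul_cycle, ← mul_assoc, hU1, one_mul,
      Matrix.diagonal_mul_diagonal, Matrix.trace_diagonal]
    rw [Complex.re_sum]
    refine Finset.sum_congr rfl fun i _ => ?_
    dsimp [χ]
    split
    · rename_i h
      simp [max_eq_left h.le]
    · rename_i h
      push_neg at h
      simp [max_eq_right h]

lemma Spos_add_le {A B : Matrix (Fin d) (Fin d) ℂ}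
    (hA : A.IsHermitian) (hB : B.IsHermitian) :
    Spos (A + B) ≤ Spos A + Spos B := by
  obtain ⟨P, hP, hP1, hPe⟩ := exists_P (hA.add hB)
  rw [← hPe, mul_add, Matrix.trace_add, Complex.add_re]
  exact add_le_add (trace_PQ_re_le hA hP hP1) (trace_PQ_re_le hB hP hP1)

lemma half_traceNorm_eq_Spos {A : Matrix (Fin d) (Fin d) ℂ}
    (hA : A.IsHermitian) (htr : A.trace = 0) :
    (1 / 2 : ℝ) * traceNorm A = Spos A := by
  have hsum : ∑ i, eigs A i = 0 := by
    have h := trace_eq_sum_eigs hA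
    rw [htr] at h
    have h2 : ((∑ i, eigs A i : ℝ) : ℂ) = 0 := by push_cast; rw [← h]
    exact_mod_cast h2
  have habs : ∀ x : ℝ, |x| = 2 * max x 0 - x := by
    intro x
    rcases le_or_gt 0 x with h | h
    · rw [abs_of_nonneg h, max_eq_left h]; ring
    · rw [abs_of_neg h, max_eq_right h.le]; ring
  rw [traceNorm, Finset.sum_congr rfl fun i _ => habs (eigs A i),
    Finset.sum_sub_distrib, hsum, sub_zero, ← Finset.mul_sum, Spos]
  ring

/-! kMaxSum facts -/

lemma kMaxSum_finite (v : Fin d → ℝ) (k : ℕ) :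
    ((fun s : Finset (Fin d) => ∑ i ∈ s, v i) '' {s | s.card = k}).Finite :=
  (Set.toFinite _).image _

lemma le_kMaxSum (v : Fin d → ℝ) {k : ℕ} (s : Finset (Fin d)) (hs : s.card = k) :
    ∑ i ∈ s, v i ≤ kMaxSum v k :=
  le_csSup (kMaxSum_finite v k).bddAbove ⟨s, hs, rfl⟩

lemma kMaxSum_le (v : Fin d → ℝ) {k : ℕ} (hk : k ≤ d) {c : ℝ}
    (h : ∀ s : Finset (Fin d), s.card = k → ∑ i ∈ s, v i ≤ c) :
    kMaxSum v k ≤ c := by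
  obtain ⟨s, -, hs⟩ := Finset.exists_subset_card_eq
    (show k ≤ (Finset.univ : Finset (Fin d)).card by simpa using hk)
  refine csSup_le ⟨_, ⟨s, hs, rfl⟩⟩ ?_
  rintro x ⟨t, ht, rfl⟩
  exact h t ht

lemma kMaxSum_const (c : ℝ) {k : ℕ} (hk : k ≤ d) :
    kMaxSum (fun _ : Fin d => c) k = k * c := by
  apply le_antisymm
  · exact kMaxSum_le _ hk fun s hs => by simp [hs]
  · obtain ⟨s, -, hs⟩ := Finset.exists_subset_card_eq
      (show k ≤ (Finset.univ : Finset (Fin d)).card by simpa using hk)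
    have := le_kMaxSum (fun _ : Fin d => c) s hs
    simpa [hs] using this

lemma kMaxSum_univ (v : Fin d → ℝ) : kMaxSum v d = ∑ i, v i := by
  apply le_antisymm
  · apply kMaxSum_le _ le_rfl
    intro s hs
    have h : s = Finset.univ := by
      apply s.card_eq_iff_eq_univ.mp
      simpa using hs
    rw [h]
  · exact le_kMaxSum v Finset.univ (by simp)

/-- the "excess over c" function -/
noncomputable def gExc (c : ℝ) (v : Fin d → ℝ) : ℝ := ∑ i, max (v i - c) 0

lemma gExc_nonneg (c : ℝ) (v : Fin d → ℝ) : 0 ≤ gExc c v :=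
  Finset.sum_nonneg fun i _ => le_max_right _ _

lemma kMaxSum_le_gExc (c : ℝ) (v : Fin d → ℝ) {k : ℕ} (hk : k ≤ d) :
    kMaxSum v k ≤ k * c + gExc c v := by
  apply kMaxSum_le _ hk
  intro s hs
  calc ∑ i ∈ s, v i = ∑ i ∈ s, (c + (v i - c)) := by simp
    _ ≤ ∑ i ∈ s, (c + max (v i - c) 0) :=
        Finset.sum_le_sum fun i _ => by
          have := le_max_left (v i - c) 0; linarith
    _ = k * c + ∑ i ∈ s, max (v i - c) 0 := by
        rw [Finset.sum_add_distrib]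
        simp [hs, mul_comm]
    _ ≤ k * c + gExc c v := by
        apply add_le_add le_rfl
        apply Finset.sum_le_sum_of_subset_of_nonneg (Finset.subset_univ s)
        intro i _ _
        exact le_max_right _ _

lemma gExc_eq_filter (c : ℝ) (v : Fin d → ℝ) :
    gExc c v = ∑ i ∈ Finset.univ.filter (fun i => c < v i), v i
      - (Finset.univ.filter (fun i => c < v i)).card * c := by
  classical
  rw [gExc, ← Finset.sum_filter_add_sum_filter_not Finset.univ (fun i => c < v i)]
  have h1 : ∑ i ∈ Finset.univ.filter (fun i => c < v i), max (v i - c) 0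
      = ∑ i ∈ Finset.univ.filter (fun i => c < v i), (v i - c) := by
    refine Finset.sum_congr rfl fun i hi => ?_
    rw [Finset.mem_filter] at hi
    rw [max_eq_left (by linarith [hi.2])]
  have h2 : ∑ i ∈ Finset.univ.filter (fun i => ¬ c < v i), max (v i - c) 0 = 0 := by
    apply Finset.sum_eq_zero
    intro i hi
    rw [Finset.mem_filter] at hi
    push_neg at hi
    rw [max_eq_right (by linarith [hi.2])]
  rw [h1, h2, add_zero, Finset.sum_sub_distrib]
  simp [mul_comm]

lemma gExc_mono (c : ℝ) (v w : Fin d → ℝ)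
    (h : ∀ k, 1 ≤ k → k ≤ d → kMaxSum v k ≤ kMaxSum w k) :
    gExc c v ≤ gExc c w := by
  classical
  set s₀ := Finset.univ.filter (fun i => c < v i) with hs₀
  rcases Nat.eq_zero_or_pos s₀.card with h0 | hpos
  · have hz : gExc c v = 0 := by
      rw [gExc_eq_filter, ← hs₀, h0]
      rw [Finset.card_eq_zero] at h0
      simp [h0]
    rw [hz]
    exact gExc_nonneg c w
  · have hk_le : s₀.card ≤ d := by simpa using s₀.card_le_univ
    have e1 : gExc c v = ∑ i ∈ s₀, v i - s₀.card * c := gExc_eq_filter c v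
    have e2 : ∑ i ∈ s₀, v i ≤ kMaxSum v s₀.card := le_kMaxSum v s₀ rfl
    have e3 : kMaxSum v s₀.card ≤ kMaxSum w s₀.card := h _ hpos hk_le
    have e4 : kMaxSum w s₀.card ≤ s₀.card * c + gExc c w := kMaxSum_le_gExc c w hk_le
    rw [e1]
    linarith

/-! mixed state facts -/

lemma smul_one_diag (c : ℝ) :
    ((c : ℂ)) • (1 : Matrix (Fin d) (Fin d) ℂ)
      = Matrix.diagonal (Complex.ofReal ∘ (fun _ : Fin d => c)) := by
  rw [Matrix.smul_one_eq_diagonal]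
  rfl

lemma mixedMat_eq : mixedMat d = (((1 / d : ℝ) : ℂ)) • (1 : Matrix (Fin d) (Fin d) ℂ) := by
  rw [mixedMat]
  norm_num

lemma sub_smul_one_conj {A : Matrix (Fin d) (Fin d) ℂ} (hA : A.IsHermitian) (c : ℝ) :
    A - (c : ℂ) • 1 = (hA.eigenvectorUnitary : Matrix (Fin d) (Fin d) ℂ)
        * Matrix.diagonal (Complex.ofReal ∘ (fun i => eigs A i - c))
        * star (hA.eigenvectorUnitary : Matrix (Fin d) (Fin d) ℂ) := by
  set U : Matrix (Fin d) (Fin d) ℂ := (hA.eigenvectorUnitary : Matrix (Fin d) (Fin d) ℂ)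
  have hU1' : U * star U = 1 := Matrix.mem_unitaryGroup_iff.mp (hA.eigenvectorUnitary).2
  have h1 : Matrix.diagonal (Complex.ofReal ∘ (fun i => eigs A i - c))
      = Matrix.diagonal (Complex.ofReal ∘ eigs A) - (c : ℂ) • 1 := by
    ext i j
    rcases eq_or_ne i j with rfl | hij
    · simp [Matrix.sub_apply, Matrix.smul_apply, Matrix.one_apply_eq]
    · simp [Matrix.diagonal_apply_ne _ hij, Matrix.one_apply_ne hij]
  rw [h1, mul_sub, sub_mul]
  congr 1
  · conv_lhs => rw [spectral hA]
  · rw [Matrix.mul_smul, mul_one, Matrix.smul_mul, hU1']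

lemma eigs_mixedMat : eigs (mixedMat d) = fun _ => (1 / d : ℝ) := by
  have hdec : mixedMat d = (1 : Matrix (Fin d) (Fin d) ℂ)
      * Matrix.diagonal (Complex.ofReal ∘ fun _ : Fin d => (1 / d : ℝ))
      * star (1 : Matrix (Fin d) (Fin d) ℂ) := by
    rw [← smul_one_diag, ← mixedMat_eq]
    simp
  have h := eigs_multiset (A := mixedMat d) 1 (Submonoid.one_mem _) _ hdec
  funext i
  have hmem : eigs (mixedMat d) i ∈ Multiset.map (eigs (mixedMat d)) Finset.univ.val :=
    Multiset.mem_map_of_mem _ (Finset.mem_univ_val i)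
  rw [h] at hmem
  obtain ⟨j, -, hj⟩ := Multiset.mem_map.mp hmem
  exact hj.symm

lemma psd_smul {A : Matrix (Fin d) (Fin d) ℂ} (hA : A.PosSemidef) {c : ℝ} (hc : 0 ≤ c) :
    (((c : ℝ) : ℂ) • A).PosSemidef := by
  constructor
  · show _ = _
    rw [Matrix.conjTranspose_smul, hA.1.eq]
    congr 1
    simp [Complex.conj_ofReal]
  · intro x
    exact (hA.smul (a := ((c : ℝ) : ℂ)) (Complex.zero_le_real.mpr hc)).2 x

lemma psd_mixedMat : (mixedMat d).PosSemidef := by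
  rw [mixedMat_eq]
  exact psd_smul Matrix.PosSemidef.one (by positivity)

lemma trace_mixedMat (hd : 1 ≤ d) : (mixedMat d).trace = 1 := by
  rw [mixedMat, Matrix.trace_smul, Matrix.trace_one]
  have hd0 : (d : ℂ) ≠ 0 := by
    exact_mod_cast Nat.cast_ne_zero.mpr (by omega)
  simp [smul_eq_mul, inv_mul_cancel₀ hd0]

lemma traceNorm_zero : traceNorm (0 : Matrix (Fin d) (Fin d) ℂ) = 0 := by
  have hdec : (0 : Matrix (Fin d) (Fin d) ℂ) = (1 : Matrix (Fin d) (Fin d) ℂ)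
      * Matrix.diagonal (Complex.ofReal ∘ fun _ : Fin d => (0 : ℝ))
      * star (1 : Matrix (Fin d) (Fin d) ℂ) := by
    have h0 : Matrix.diagonal (Complex.ofReal ∘ fun _ : Fin d => (0 : ℝ))
        = (0 : Matrix (Fin d) (Fin d) ℂ) := by
      ext i j
      by_cases h : i = j <;> simp [h, Matrix.diagonal_apply_ne]
    rw [h0]
    simp
  rw [traceNorm_eq_of_conj _ (Submonoid.one_mem _) _ hdec]
  simp

end TriangleAux

namespace TriangleAux

lemma herm_state (X : MState d) : X.1.IsHermitian := X.2.1.1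

lemma half_tn_sub_mixed (hd : 1 ≤ d) (X : MState d) :
    (1 / 2 : ℝ) * traceNorm (X.1 - mixedMat d) = gExc (1 / d : ℝ) (eigs X.1) := by
  have hX : X.1.IsHermitian := herm_state X
  have hherm : (X.1 - mixedMat d).IsHermitian := hX.sub (psd_mixedMat).1
  have htr : (X.1 - mixedMat d).trace = 0 := by
    rw [Matrix.trace_sub, X.2.2, trace_mixedMat hd, sub_self]
  have hdec : X.1 - mixedMat d = (hX.eigenvectorUnitary : Matrix (Fin d) (Fin d) ℂ)
      * Matrix.diagonal (Complex.ofReal ∘ (fun i => eigs X.1 i - (1 / d : ℝ)))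
      * star (hX.eigenvectorUnitary : Matrix (Fin d) (Fin d) ℂ) := by
    rw [mixedMat_eq]
    exact sub_smul_one_conj hX (1 / d : ℝ)
  rw [half_traceNorm_eq_Spos hherm htr, Spos,
    sum_f_eigs_eq _ (hX.eigenvectorUnitary).2 _ hdec (fun x => max x 0), gExc]

lemma half_tn_sub_comm {A B : Matrix (Fin d) (Fin d) ℂ}
    (h : (A - B).IsHermitian) : traceNorm (A - B) = traceNorm (B - A) := by
  rw [← neg_sub B A, traceNorm_neg]
  rwa [← neg_sub B A, Matrix.IsHermitian, Matrix.conjTranspose_neg, neg_inj,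
    ← Matrix.IsHermitian] at h

end TriangleAux

/-- `ρ*_ε(σ)` saturates the triangle inequality between `σ` and the
completely mixed state `τ = (1/d)·I`. -/
theorem minState_saturates_triangle
    {d : ℕ} (hd : 1 ≤ d) (σ : MState d) (ε : ℝ) (hε : ε ∈ Set.Ioc (0 : ℝ) 1)
    (ρ : MState d) (hρ : IsMinState ε σ ρ) :
    (1 / 2 : ℝ) * traceNorm (σ.1 - mixedMat d) =
      (1 / 2 : ℝ) * traceNorm (mixedMat d - ρ.1) +
      (1 / 2 : ℝ) * traceNorm (ρ.1 - σ.1) := by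
  classical
  obtain ⟨hε0, hε1⟩ := hε
  have hσh : σ.1.IsHermitian := TriangleAux.herm_state σ
  have hρh : ρ.1.IsHermitian := TriangleAux.herm_state ρ
  have hmixpsd : (mixedMat d).PosSemidef := TriangleAux.psd_mixedMat
  have hmixh : (mixedMat d).IsHermitian := hmixpsd.1
  set D : ℝ := (1 / 2 : ℝ) * traceNorm (σ.1 - mixedMat d) with hD
  clear_value D
  have htr_σρ : (σ.1 - ρ.1).trace = 0 := by
    rw [Matrix.trace_sub, σ.2.2, ρ.2.2, sub_self]
  have htr_ρτ : (ρ.1 - mixedMat d).trace = 0 := by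
    rw [Matrix.trace_sub, ρ.2.2, TriangleAux.trace_mixedMat hd, sub_self]
  have hsym_τρ : traceNorm (mixedMat d - ρ.1) = traceNorm (ρ.1 - mixedMat d) :=
    TriangleAux.half_tn_sub_comm (hmixh.sub hρh)
  have hsym_σρ : traceNorm (σ.1 - ρ.1) = traceNorm (ρ.1 - σ.1) :=
    TriangleAux.half_tn_sub_comm (hσh.sub hρh)
  have hsym_στ : traceNorm (σ.1 - mixedMat d) = traceNorm (mixedMat d - σ.1) :=
    TriangleAux.half_tn_sub_comm (hσh.sub hmixh)
  rcases le_total D ε with hcase | hcase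
  · -- τ is in the ball, so ρ = τ
    have hτball : inBall ε σ ⟨mixedMat d, hmixpsd, TriangleAux.trace_mixedMat hd⟩ := by
      show (1 / 2 : ℝ) * traceNorm (mixedMat d - σ.1) ≤ ε
      rw [← hsym_στ, ← hD]
      exact hcase
    have hmajτ := hρ.2 _ hτball
    have hmaj1 : ∀ k, 1 ≤ k → k ≤ d →
        kMaxSum (eigs ρ.1) k ≤ kMaxSum (eigs (mixedMat d)) k := hmajτ.1
    have hmaj2 : kMaxSum (eigs ρ.1) d = kMaxSum (eigs (mixedMat d)) d := hmajτ.2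
    have heigτ : eigs (mixedMat d) = fun _ : Fin d => (1 / d : ℝ) := TriangleAux.eigs_mixedMat
    set μ : Fin d → ℝ := eigs ρ.1 with hμ
    have hle : ∀ i, μ i ≤ (1 / d : ℝ) := by
      intro i
      have h1 : μ i ≤ kMaxSum μ 1 := by
        have := TriangleAux.le_kMaxSum (k := 1) μ {i} (by simp)
        simpa using this
      have h2 : kMaxSum μ 1 ≤ kMaxSum (eigs (mixedMat d)) 1 := hmaj1 1 le_rfl hd
      rw [heigτ, TriangleAux.kMaxSum_const _ hd] at h2
      simp only [Nat.cast_one, one_mul] at h2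
      linarith
    have hsumeq : ∑ i, μ i = ∑ i, (fun _ : Fin d => (1 / d : ℝ)) i := by
      have := hmaj2
      rw [heigτ] at this
      rwa [TriangleAux.kMaxSum_univ, TriangleAux.kMaxSum_univ] at this
    have hμconst : ∀ i, μ i = (1 / d : ℝ) :=
      fun i => (Finset.sum_eq_sum_iff_of_le (fun j _ => hle j)).mp hsumeq i (Finset.mem_univ i)
    have hρτ : ρ.1 = mixedMat d := by
      have hdec := TriangleAux.spectral hρh
      rw [← hμ] at hdec
      have hμfun : μ = fun _ : Fin d => (1 / d : ℝ) := funext hμconst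
      have hdiag : Matrix.diagonal (Complex.ofReal ∘ μ)
          = (((1 / d : ℝ) : ℂ)) • (1 : Matrix (Fin d) (Fin d) ℂ) := by
        rw [hμfun, TriangleAux.smul_one_diag]
      rw [hdiag] at hdec
      rw [hdec, Matrix.mul_smul, mul_one, Matrix.smul_mul,
        Matrix.mem_unitaryGroup_iff.mp (hρh.eigenvectorUnitary).2, ← TriangleAux.mixedMat_eq]
    rw [hρτ, sub_self, TriangleAux.traceNorm_zero, hD, hsym_στ]
    ring
  · -- ε ≤ D : construct the interpolated state ω
    have hD0 : (0 : ℝ) < D := lt_of_lt_of_le hε0 hcase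
    set t : ℝ := ε / D with ht
    have ht0 : 0 ≤ t := le_of_lt (div_pos hε0 hD0)
    have ht1 : t ≤ 1 := (div_le_one hD0).mpr hcase
    have htD : t * D = ε := div_mul_cancel₀ ε hD0.ne'
    clear_value t
    set M : Matrix (Fin d) (Fin d) ℂ :=
      (((1 - t : ℝ) : ℂ)) • σ.1 + ((t : ℝ) : ℂ) • mixedMat d with hM
    have hMpsd : M.PosSemidef :=
      (TriangleAux.psd_smul σ.2.1 (by linarith)).add (TriangleAux.psd_smul hmixpsd ht0)
    have hMtr : M.trace = 1 := by
      rw [hM, Matrix.trace_add, Matrix.trace_smul, Matrix.trace_smul, σ.2.2,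
        TriangleAux.trace_mixedMat hd]
      simp only [smul_eq_mul, mul_one]
      push_cast
      ring
    set ω : MState d := ⟨M, hMpsd, hMtr⟩ with hω
    have hsub1 : M - σ.1 = ((t : ℝ) : ℂ) • (mixedMat d - σ.1) := by
      rw [hM]
      push_cast
      module
    have hsub2 : M - mixedMat d = (((1 - t : ℝ)) : ℂ) • (σ.1 - mixedMat d) := by
      rw [hM]
      push_cast
      module
    have hball : inBall ε σ ω := by
      show (1 / 2 : ℝ) * traceNorm (M - σ.1) ≤ ε
      rw [hsub1, TriangleAux.traceNorm_smul (hmixh.sub hσh), abs_of_nonneg ht0, ← hsym_στ]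
      calc (1 / 2 : ℝ) * (t * traceNorm (σ.1 - mixedMat d))
          = t * D := by rw [hD]; ring
        _ ≤ ε := le_of_eq htD
    have hmaj := hρ.2 ω hball
    -- bound (1/2) ‖ρ - τ‖
    have hx : (1 / 2 : ℝ) * traceNorm (ρ.1 - mixedMat d) ≤ D - ε := by
      have e1 : (1 / 2 : ℝ) * traceNorm (ρ.1 - mixedMat d)
          = TriangleAux.gExc (1 / d : ℝ) (eigs ρ.1) := TriangleAux.half_tn_sub_mixed hd ρ
      have e2 : (1 / 2 : ℝ) * traceNorm (M - mixedMat d)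
          = TriangleAux.gExc (1 / d : ℝ) (eigs M) := TriangleAux.half_tn_sub_mixed hd ω
      have e3 : TriangleAux.gExc (1 / d : ℝ) (eigs ρ.1)
          ≤ TriangleAux.gExc (1 / d : ℝ) (eigs M) :=
        TriangleAux.gExc_mono _ _ _ hmaj.1
      have e4 : (1 / 2 : ℝ) * traceNorm (M - mixedMat d) = D - ε := by
        rw [hsub2, TriangleAux.traceNorm_smul (hσh.sub hmixh), abs_of_nonneg (by linarith : (0:ℝ) ≤ 1 - t)]
        calc (1 / 2 : ℝ) * ((1 - t) * traceNorm (σ.1 - mixedMat d))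
            = (1 - t) * D := by rw [hD]; ring
          _ = D - ε := by rw [← htD]; ring
      rw [← e2] at e3
      rw [e4] at e3
      rw [e1]
      exact e3
    have hy : (1 / 2 : ℝ) * traceNorm (ρ.1 - σ.1) ≤ ε := hρ.1
    -- triangle inequality
    have htri : D ≤ (1 / 2 : ℝ) * traceNorm (σ.1 - ρ.1)
        + (1 / 2 : ℝ) * traceNorm (ρ.1 - mixedMat d) := by
      have hsplit : σ.1 - mixedMat d = (σ.1 - ρ.1) + (ρ.1 - mixedMat d) := by abel
      have htrστ : (σ.1 - mixedMat d).trace = 0 := by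
        rw [Matrix.trace_sub, σ.2.2, TriangleAux.trace_mixedMat hd, sub_self]
      rw [hD, TriangleAux.half_traceNorm_eq_Spos (hσh.sub hmixh) htrστ,
        TriangleAux.half_traceNorm_eq_Spos (hσh.sub hρh) htr_σρ,
        TriangleAux.half_traceNorm_eq_Spos (hρh.sub hmixh) htr_ρτ, hsplit]
      exact TriangleAux.Spos_add_le (hσh.sub hρh) (hρh.sub hmixh)
    rw [hsym_σρ] at htri
    rw [hsym_τρ]
    linarith
end
end

section
/- Let ε > 0 and let Δ be a d×d Hermitian matrix with tr(Δ) = 0 and (1/2)‖Δ‖₁ ≤ ε, and let L be a d×d Hermitian matrix. Then tr(LΔ) ≤ ε (λ₊(L) − λ₋(L)), where λ₊(L) and λ₋(L) are the largest and smallest eigenvalues of L. Moreover, equality holds if and only if both of the following hold: (1) either (1/2)‖Δ‖₁ = ε or L is a real multiple of the identity; and (2) π₊ L π₊ = λ₊(L) π₊ and π₋ L π₋ = λ₋(L) π₋, where Δ = Δ₊ − Δ₋ is the Jordan decomposition of Δ into its positive and negative parts and π₊, π₋ are the orthogonal projections onto the supports (ranges) of Δ₊ and Δ₋ respectively. -/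
open scoped BigOperators ComplexOrder

noncomputable section

/-- The largest eigenvalue `λ₊` of a Hermitian matrix. -/
noncomputable def lamMax {d : ℕ} (A : Matrix (Fin d) (Fin d) ℂ) : ℝ :=
  ⨆ i, eigs A i

/-- The smallest eigenvalue `λ₋` of a Hermitian matrix. -/
noncomputable def lamMin {d : ℕ} (A : Matrix (Fin d) (Fin d) ℂ) : ℝ :=
  ⨅ i, eigs A i

/-- `P` is the orthogonal projection onto the support (range) of the Hermitian matrix `A`:
`P` is a Hermitian idempotent which acts as the identity on the range of `A` and vanishes on
its kernel. -/
def IsSupportProj {d : ℕ} (P A : Matrix (Fin d) (Fin d) ℂ) : Prop :=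
  P.IsHermitian ∧ P * P = P ∧ P * A = A ∧
    ∀ x : Fin d → ℂ, A.mulVec x = 0 → P.mulVec x = 0

section PortHelpers
open scoped MatrixOrder Matrix

noncomputable def Matrix.PosSemidef.sqrt {d : ℕ} {M : Matrix (Fin d) (Fin d) ℂ}
    (_hM : M.PosSemidef) : Matrix (Fin d) (Fin d) ℂ := CFC.sqrt M

lemma Matrix.PosSemidef.posSemidef_sqrt {d : ℕ} {M : Matrix (Fin d) (Fin d) ℂ}
    (hM : M.PosSemidef) : hM.sqrt.PosSemidef :=
  Matrix.nonneg_iff_posSemidef.mp (CFC.sqrt_nonneg M)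

lemma Matrix.PosSemidef.sqrt_mul_self {d : ℕ} {M : Matrix (Fin d) (Fin d) ℂ}
    (hM : M.PosSemidef) : hM.sqrt * hM.sqrt = M :=
  CFC.sqrt_mul_sqrt_self M (Matrix.nonneg_iff_posSemidef.mpr hM)

lemma Matrix.PosSemidef.eq_of_sq_eq_sq {d : ℕ} {A B : Matrix (Fin d) (Fin d) ℂ}
    (hA : A.PosSemidef) (hB : B.PosSemidef) (h : A ^ 2 = B ^ 2) : A = B := by
  rw [← CFC.sqrt_sq A (Matrix.nonneg_iff_posSemidef.mpr hA), h,
    CFC.sqrt_sq B (Matrix.nonneg_iff_posSemidef.mpr hB)]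

lemma Matrix.posSemidef_iff_eq_transpose_mul_self {d : ℕ} {A : Matrix (Fin d) (Fin d) ℂ} :
    A.PosSemidef ↔ ∃ B : Matrix (Fin d) (Fin d) ℂ, A = Bᴴ * B := by
  constructor
  · intro hA
    exact ⟨hA.sqrt, by rw [hA.posSemidef_sqrt.1.eq, hA.sqrt_mul_self]⟩
  · rintro ⟨B, rfl⟩
    exact Matrix.posSemidef_conjTranspose_mul_self B

lemma Matrix.IsHermitian.star_mul_self_mul_eq_diagonal {d : ℕ}
    {A : Matrix (Fin d) (Fin d) ℂ} (hA : A.IsHermitian) :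
    star (hA.eigenvectorUnitary : Matrix (Fin d) (Fin d) ℂ) * A *
      (hA.eigenvectorUnitary : Matrix (Fin d) (Fin d) ℂ) =
      Matrix.diagonal (RCLike.ofReal ∘ hA.eigenvalues) := by
  have := hA.conjStarAlgAut_star_eigenvectorUnitary
  simpa using this

end PortHelpers

section Helpers
open Matrix
variable {d : ℕ}



/-- trace of PSD real part is sum of nonneg diag entries; zero trace implies zero matrix -/
lemma psd_trace_re_nonneg {N : Matrix (Fin d) (Fin d) ℂ} (hN : N.PosSemidef) :
    0 ≤ N.trace.re := by
  obtain ⟨B, rfl⟩ := Matrix.posSemidef_iff_eq_transpose_mul_self.mp hN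
  rw [Matrix.trace]
  simp only [Matrix.diag_apply, Matrix.mul_apply, Matrix.conjTranspose_apply]
  rw [Complex.re_sum]
  refine Finset.sum_nonneg fun i _ => ?_
  rw [Complex.re_sum]
  refine Finset.sum_nonneg fun k _ => ?_
  simp [Complex.mul_re, mul_self_nonneg, ← sq]
  nlinarith [sq_nonneg (B k i).re, sq_nonneg (B k i).im]

lemma psd_trace_eq_zero {N : Matrix (Fin d) (Fin d) ℂ} (hN : N.PosSemidef)
    (h : N.trace.re = 0) : N = 0 := by
  obtain ⟨B, rfl⟩ := Matrix.posSemidef_iff_eq_transpose_mul_self.mp hN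
  rw [Matrix.conjTranspose_mul_self_eq_zero]
  have key : ∀ k i, B k i = 0 := by
    have h2 : ∑ i, ∑ k, ((B k i).re ^ 2 + (B k i).im ^ 2) = 0 := by
      rw [← h, Matrix.trace]
      simp only [Matrix.diag_apply, Matrix.mul_apply, Matrix.conjTranspose_apply]
      rw [Complex.re_sum]
      refine Finset.sum_congr rfl fun i _ => ?_
      rw [Complex.re_sum]
      refine Finset.sum_congr rfl fun k _ => ?_
      simp [Complex.mul_re, sq]
    intro k i
    have h3 := Finset.sum_eq_zero_iff_of_nonneg (fun i _ => Finset.sum_nonneg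
      (fun k _ => by positivity)) |>.mp h2 i (Finset.mem_univ i)
    have h4 := Finset.sum_eq_zero_iff_of_nonneg (fun k _ => by positivity) |>.mp h3 k
      (Finset.mem_univ k)
    have : (B k i).re = 0 ∧ (B k i).im = 0 := by constructor <;> nlinarith [sq_nonneg (B k i).re, sq_nonneg (B k i).im]
    exact Complex.ext this.1 this.2
  ext k i; exact key k i
lemma trace_mul_psd_nonneg {M ρ : Matrix (Fin d) (Fin d) ℂ}
    (hM : M.PosSemidef) (hρ : ρ.PosSemidef) :
    0 ≤ ((M * ρ).trace).re ∧ (((M * ρ).trace).re = 0 ↔ M * ρ = 0) := by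
  classical
  have hSps := hM.posSemidef_sqrt
  have hTps := hρ.posSemidef_sqrt
  have hSH : (hM.sqrt)ᴴ = hM.sqrt := hSps.1
  have hTH : (hρ.sqrt)ᴴ = hρ.sqrt := hTps.1
  have hN : (hM.sqrt * ρ * (hM.sqrt)ᴴ).PosSemidef := hρ.mul_mul_conjTranspose_same hM.sqrt
  rw [hSH] at hN
  have htr : (M * ρ).trace = (hM.sqrt * ρ * hM.sqrt).trace := by
    conv_lhs => rw [← hM.sqrt_mul_self]
    rw [mul_assoc, Matrix.trace_mul_comm, mul_assoc]
  have hfact : (hρ.sqrt * hM.sqrt)ᴴ * (hρ.sqrt * hM.sqrt) = hM.sqrt * ρ * hM.sqrt := by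
    rw [Matrix.conjTranspose_mul, hTH, hSH, mul_assoc, ← mul_assoc hρ.sqrt,
      hρ.sqrt_mul_self, ← mul_assoc]
  refine ⟨by rw [htr]; exact psd_trace_re_nonneg hN, ?_, fun h => by rw [h]; simp⟩
  intro h0
  rw [htr] at h0
  have hNz : hM.sqrt * ρ * hM.sqrt = 0 := psd_trace_eq_zero hN h0
  have hTS : hρ.sqrt * hM.sqrt = 0 := by
    rw [← Matrix.conjTranspose_mul_self_eq_zero (A := hρ.sqrt * hM.sqrt), hfact, hNz]
  have hρM : ρ * M = 0 := by
    conv_lhs => rw [← hρ.sqrt_mul_self, ← hM.sqrt_mul_self]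
    rw [mul_assoc, ← mul_assoc hρ.sqrt hM.sqrt, hTS, zero_mul, mul_zero]
  calc M * ρ = (ρ * M)ᴴ := by
        rw [Matrix.conjTranspose_mul, hM.1.eq, hρ.1.eq]
  _ = 0 := by rw [hρM, Matrix.conjTranspose_zero]
lemma smul_one_sub_eq_conj {L : Matrix (Fin d) (Fin d) ℂ} (hL : L.IsHermitian) (a : ℝ) :
    (a : ℂ) • (1 : Matrix (Fin d) (Fin d) ℂ) - L =
      (hL.eigenvectorUnitary : Matrix (Fin d) (Fin d) ℂ) *
        Matrix.diagonal (fun i => ((a - hL.eigenvalues i : ℝ) : ℂ)) *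
        star (hL.eigenvectorUnitary : Matrix (Fin d) (Fin d) ℂ) := by
  set V := (hL.eigenvectorUnitary : Matrix (Fin d) (Fin d) ℂ) with hVdef
  have hV : V * star V = 1 := Matrix.mem_unitaryGroup_iff.mp hL.eigenvectorUnitary.2
  have h1 : (a : ℂ) • (1 : Matrix (Fin d) (Fin d) ℂ) = V * ((a : ℂ) • 1) * star V := by
    rw [Matrix.mul_smul, Matrix.mul_one, Matrix.smul_mul, hV]
  conv_lhs => rw [hL.spectral_theorem, Unitary.conjStarAlgAut_apply, h1]
  rw [← Matrix.sub_mul, ← Matrix.mul_sub]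
  congr 2
  rw [Matrix.smul_one_eq_diagonal]
  ext i j
  by_cases hij : i = j <;>
    simp [Matrix.diagonal_apply, hij, Function.comp, Complex.ofReal_sub]

lemma psd_smul_one_sub {L : Matrix (Fin d) (Fin d) ℂ} (hL : L.IsHermitian) {a : ℝ}
    (hub : ∀ i, hL.eigenvalues i ≤ a) :
    ((a : ℂ) • (1 : Matrix (Fin d) (Fin d) ℂ) - L).PosSemidef := by
  rw [smul_one_sub_eq_conj hL a]
  exact (Matrix.PosSemidef.diagonal
    (fun i => Complex.zero_le_real.mpr (by linarith [hub i]))).mul_mul_conjTranspose_same _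

lemma psd_sub_smul_one {L : Matrix (Fin d) (Fin d) ℂ} (hL : L.IsHermitian) {a : ℝ}
    (hlb : ∀ i, a ≤ hL.eigenvalues i) :
    (L - (a : ℂ) • (1 : Matrix (Fin d) (Fin d) ℂ)).PosSemidef := by
  have h : L - (a : ℂ) • (1 : Matrix (Fin d) (Fin d) ℂ) =
      (hL.eigenvectorUnitary : Matrix (Fin d) (Fin d) ℂ) *
        Matrix.diagonal (fun i => ((hL.eigenvalues i - a : ℝ) : ℂ)) *
        star (hL.eigenvectorUnitary : Matrix (Fin d) (Fin d) ℂ) := by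
    have := smul_one_sub_eq_conj hL a
    have h2 : L - (a : ℂ) • (1 : Matrix (Fin d) (Fin d) ℂ) =
        -((a : ℂ) • (1 : Matrix (Fin d) (Fin d) ℂ) - L) := (neg_sub _ _).symm
    rw [h2, this, ← Matrix.neg_mul, ← Matrix.mul_neg]
    congr 2
    ext i j
    by_cases hij : i = j <;>
      simp [Matrix.diagonal_apply, hij, Complex.ofReal_sub]
  rw [h]
  exact (Matrix.PosSemidef.diagonal
    (fun i => Complex.zero_le_real.mpr (by linarith [hlb i]))).mul_mul_conjTranspose_same _
lemma support_proj_range {ρ P : Matrix (Fin d) (Fin d) ℂ} (hρ : ρ.PosSemidef)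
    (hP : IsSupportProj P ρ) (x : Fin d → ℂ) : ∃ y, P *ᵥ x = ρ *ᵥ y := by
  classical
  set V := (hρ.1.eigenvectorUnitary : Matrix (Fin d) (Fin d) ℂ) with hVdef
  set μ := hρ.1.eigenvalues with hμdef
  have hV1 : V * star V = 1 := Matrix.mem_unitaryGroup_iff.mp hρ.1.eigenvectorUnitary.2
  have hV2 : star V * V = 1 := Matrix.mem_unitaryGroup_iff'.mp hρ.1.eigenvectorUnitary.2
  have hρV : ρ * V = V * Matrix.diagonal (RCLike.ofReal ∘ μ) := by
    conv_lhs => rw [hρ.1.spectral_theorem, Unitary.conjStarAlgAut_apply]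
    rw [mul_assoc, hV2, mul_one]
  set w : Fin d → ℂ := (star V) *ᵥ x with hwdef
  set u : Fin d → ℂ := fun i => if μ i = 0 then 0 else w i / (μ i : ℂ) with hudef
  set y := V *ᵥ u with hydef
  have hdv : ∀ v : Fin d → ℂ,
      Matrix.diagonal (RCLike.ofReal ∘ μ) *ᵥ v = fun i => (μ i : ℂ) * v i := by
    intro v
    funext i
    rw [Matrix.mulVec_diagonal]
    rfl
  have hdiag : ∀ v : Fin d → ℂ,
      ρ *ᵥ (V *ᵥ v) = V *ᵥ (fun i => (μ i : ℂ) * v i) := by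
    intro v
    rw [Matrix.mulVec_mulVec, hρV, ← Matrix.mulVec_mulVec, hdv]
  have hx : x = V *ᵥ w := by
    rw [hwdef, Matrix.mulVec_mulVec, hV1, Matrix.one_mulVec]
  have hkey : (fun i => (μ i : ℂ) * u i) = fun i => if μ i = 0 then 0 else w i := by
    funext i
    by_cases h : μ i = 0 <;> simp [hudef, h]
    rw [mul_div_cancel₀]
    exact_mod_cast h
  have hρy : ρ *ᵥ y = V *ᵥ (fun i => if μ i = 0 then 0 else w i) := by
    rw [hydef, hdiag, hkey]
  have hz : ρ *ᵥ (x - ρ *ᵥ y) = 0 := by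
    rw [Matrix.mulVec_sub]
    have h1 : ρ *ᵥ x = V *ᵥ (fun i => (μ i : ℂ) * w i) := by
      conv_lhs => rw [hx]
      exact hdiag w
    have hkey2 : (fun i => (μ i : ℂ) * if μ i = 0 then 0 else w i) =
        fun i => (μ i : ℂ) * w i := by
      funext i
      by_cases h : μ i = 0 <;> simp [h]
    have h2 : ρ *ᵥ (ρ *ᵥ y) = V *ᵥ (fun i => (μ i : ℂ) * w i) := by
      rw [hρy, hdiag, hkey2]
    rw [h1, h2, sub_self]
  refine ⟨y, ?_⟩
  have hdecomp : x = ρ *ᵥ y + (x - ρ *ᵥ y) := by ring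
  conv_lhs => rw [hdecomp]
  rw [Matrix.mulVec_add, hP.2.2.2 _ hz, add_zero, Matrix.mulVec_mulVec, hP.2.2.1]

lemma core_bound {L ρ P : Matrix (Fin d) (Fin d) ℂ} (hL : L.IsHermitian) (hρ : ρ.PosSemidef)
    (hP : IsSupportProj P ρ) (a : ℝ)
    (hM : ((a : ℂ) • (1 : Matrix (Fin d) (Fin d) ℂ) - L).PosSemidef) :
    ((L * ρ).trace).re ≤ a * ((ρ.trace).re) ∧
    (((L * ρ).trace).re = a * (ρ.trace).re ↔ P * L * P = (a : ℂ) • P) := by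
  set M := (a : ℂ) • (1 : Matrix (Fin d) (Fin d) ℂ) - L with hMdef
  have hMρ : M * ρ = (a : ℂ) • ρ - L * ρ := by
    rw [hMdef, Matrix.sub_mul, Matrix.smul_mul, Matrix.one_mul]
  have htrM : ((M * ρ).trace).re = a * (ρ.trace).re - ((L * ρ).trace).re := by
    rw [hMρ, Matrix.trace_sub, Matrix.trace_smul]
    simp [Complex.sub_re, smul_eq_mul, Complex.mul_re]
  obtain ⟨hpos, hzero⟩ := trace_mul_psd_nonneg hM hρ
  have hPρ : P * ρ = ρ := hP.2.2.1
  refine ⟨by linarith, ?_, ?_⟩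
  · intro heq
    have hMρ0 : M * ρ = 0 := hzero.mp (by rw [htrM]; linarith)
    have hMPv : ∀ x, (M * P) *ᵥ x = 0 := by
      intro x
      obtain ⟨y, hy⟩ := support_proj_range hρ hP x
      rw [← Matrix.mulVec_mulVec, hy, Matrix.mulVec_mulVec, hMρ0, Matrix.zero_mulVec]
    have hMP : M * P = 0 := by
      ext i j
      have := congrFun (hMPv (Pi.single j 1)) i
      simpa using this
    have hLP : L * P = (a : ℂ) • P := by
      have : ((a : ℂ) • (1 : Matrix (Fin d) (Fin d) ℂ)) * P - L * P = 0 := by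
        rw [← Matrix.sub_mul, ← hMdef, hMP]
      rw [Matrix.smul_mul, Matrix.one_mul] at this
      exact (sub_eq_zero.mp this).symm
    rw [mul_assoc, hLP, Matrix.mul_smul, hP.2.1]
  · intro hPLP
    have hρP : ρ * P = ρ := by
      have h := congrArg Matrix.conjTranspose hPρ
      rwa [Matrix.conjTranspose_mul, hρ.1.eq, hP.1.eq] at h
    have hPMP : P * M * P = 0 := by
      rw [hMdef, Matrix.mul_sub, Matrix.sub_mul, Matrix.mul_smul, Matrix.mul_one,
        Matrix.smul_mul, hP.2.1, hPLP, sub_self]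
    have h0 : (M * ρ).trace = 0 := by
      have hρ' : P * ρ * P = ρ := by rw [hPρ, hρP]
      calc (M * ρ).trace = (M * (P * ρ * P)).trace := by rw [hρ']
      _ = ((M * P * ρ) * P).trace := by rw [← mul_assoc, ← mul_assoc]
      _ = (P * (M * P * ρ)).trace := (Matrix.trace_mul_comm _ _)
      _ = ((P * M * P) * ρ).trace := by rw [← mul_assoc, ← mul_assoc]
      _ = 0 := by rw [hPMP, Matrix.zero_mul, Matrix.trace_zero]
    have : ((M * ρ).trace).re = 0 := by rw [h0]; exact Complex.zero_re
    rw [htrM] at this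
    linarith
lemma traceNorm_eq_trace_add {Δ Δp Δn : Matrix (Fin d) (Fin d) ℂ} (hΔ : Δ.IsHermitian)
    (hΔp : Δp.PosSemidef) (hΔn : Δn.PosSemidef)
    (hJordan : Δ = Δp - Δn) (hOrth : Δp * Δn = 0) :
    traceNorm Δ = ((Δp + Δn).trace).re := by
  classical
  have hnp : Δn * Δp = 0 := by
    have h := congrArg Matrix.conjTranspose hOrth
    rwa [Matrix.conjTranspose_mul, hΔp.1.eq, hΔn.1.eq, Matrix.conjTranspose_zero] at h
  have hS : (Δp + Δn).PosSemidef := hΔp.add hΔn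
  have hsq : (Δp + Δn) ^ 2 = Δ ^ 2 := by
    have e1 : (Δp + Δn) ^ 2 = Δp * Δp + Δn * Δn := by
      rw [sq, add_mul, mul_add, mul_add, hOrth, hnp, add_zero, zero_add]
    have e2 : (Δp - Δn) ^ 2 = Δp * Δp + Δn * Δn := by
      rw [sq, sub_mul, mul_sub, mul_sub, hOrth, hnp, sub_zero, zero_sub, sub_neg_eq_add]
    rw [hJordan, e1, e2]
  set V := (hΔ.eigenvectorUnitary : Matrix (Fin d) (Fin d) ℂ) with hVdef
  have hV2 : star V * V = 1 := Matrix.mem_unitaryGroup_iff'.mp hΔ.eigenvectorUnitary.2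
  have haux : ∀ f g : Fin d → ℂ,
      (V * Matrix.diagonal f * star V) * (V * Matrix.diagonal g * star V) =
        V * Matrix.diagonal (fun i => f i * g i) * star V := by
    intro f g
    have h1 : (V * Matrix.diagonal f) * ((star V * V) * (Matrix.diagonal g * star V)) =
        (V * Matrix.diagonal f * star V) * (V * Matrix.diagonal g * star V) := by
      noncomm_ring
    rw [← h1, hV2, one_mul]
    have h2 : (V * Matrix.diagonal f) * (Matrix.diagonal g * star V) =
        V * (Matrix.diagonal f * Matrix.diagonal g) * star V := by noncomm_ring
    rw [h2, Matrix.diagonal_mul_diagonal]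
  set T := V * Matrix.diagonal (fun i => ((|hΔ.eigenvalues i| : ℝ) : ℂ)) * star V with hTdef
  have hT : T.PosSemidef :=
    (Matrix.PosSemidef.diagonal
      (fun i => Complex.zero_le_real.mpr (abs_nonneg _))).mul_mul_conjTranspose_same V
  have hTsq : T ^ 2 = Δ ^ 2 := by
    conv_rhs => rw [hΔ.spectral_theorem, Unitary.conjStarAlgAut_apply]
    rw [sq, sq, hTdef, haux, haux]
    have hfun : (fun i => ((|hΔ.eigenvalues i| : ℝ) : ℂ) * ((|hΔ.eigenvalues i| : ℝ) : ℂ)) =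
        fun i => (RCLike.ofReal ∘ hΔ.eigenvalues) i * (RCLike.ofReal ∘ hΔ.eigenvalues) i := by
      funext i
      simp only [Function.comp_apply]
      norm_cast
      rw [abs_mul_abs_self]
      rfl
    rw [hfun]
  have hST : Δp + Δn = T := hS.eq_of_sq_eq_sq hT (hsq.trans hTsq.symm)
  have htrT : T.trace = ∑ i, ((|hΔ.eigenvalues i| : ℝ) : ℂ) := by
    rw [hTdef, Matrix.trace_mul_cycle, hV2, one_mul, Matrix.trace_diagonal]
  rw [hST, htrT, traceNorm]
  rw [Complex.re_sum]
  refine Finset.sum_congr rfl fun i _ => ?_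
  rw [eigs, dif_pos hΔ]
  simp

lemma exists_smul_iff {L : Matrix (Fin d) (Fin d) ℂ} [Nonempty (Fin d)]
    (hL : L.IsHermitian) :
    (∃ c : ℝ, L = (c : ℂ) • (1 : Matrix (Fin d) (Fin d) ℂ)) ↔ lamMax L = lamMin L := by
  classical
  have heigs : eigs L = hL.eigenvalues := by rw [eigs, dif_pos hL]
  set V := (hL.eigenvectorUnitary : Matrix (Fin d) (Fin d) ℂ) with hVdef
  have hV1 : V * star V = 1 := Matrix.mem_unitaryGroup_iff.mp hL.eigenvectorUnitary.2
  have hV2 : star V * V = 1 := Matrix.mem_unitaryGroup_iff'.mp hL.eigenvectorUnitary.2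
  constructor
  · rintro ⟨c, rfl⟩
    have hdiag : Matrix.diagonal (RCLike.ofReal ∘ hL.eigenvalues) =
        Matrix.diagonal (fun _ : Fin d => (c : ℂ)) := by
      rw [← hL.star_mul_self_mul_eq_diagonal]
      rw [Matrix.mul_smul, Matrix.mul_one, Matrix.smul_mul, hV2]
      rw [Matrix.smul_one_eq_diagonal]
    have heq : ∀ i, hL.eigenvalues i = c := by
      intro i
      have := Matrix.ext_iff.mpr hdiag i i
      rw [Matrix.diagonal_apply_eq, Matrix.diagonal_apply_eq] at this
      simpa using congrArg Complex.re this
    rw [lamMax, lamMin, heigs]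
    simp only [heq, ciSup_const, ciInf_const]
  · intro h
    refine ⟨lamMax L, ?_⟩
    have hub : ∀ i, eigs L i ≤ lamMax L := fun i =>
      le_ciSup (Set.Finite.bddAbove (Set.finite_range _)) i
    have hlb : ∀ i, lamMin L ≤ eigs L i := fun i =>
      ciInf_le (Set.Finite.bddBelow (Set.finite_range _)) i
    have heq : ∀ i, hL.eigenvalues i = lamMax L := by
      intro i
      have := hlb i
      rw [← h] at this
      have h2 := hub i
      rw [heigs] at this h2
      linarith
    conv_lhs => rw [hL.spectral_theorem, Unitary.conjStarAlgAut_apply]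
    have : Matrix.diagonal (RCLike.ofReal ∘ hL.eigenvalues) =
        (lamMax L : ℂ) • (1 : Matrix (Fin d) (Fin d) ℂ) := by
      rw [Matrix.smul_one_eq_diagonal]
      ext i j
      by_cases hij : i = j <;> simp [Matrix.diagonal_apply, hij, heq]
    rw [this, Matrix.mul_smul, Matrix.smul_mul, Matrix.mul_one, hV1]

end Helpers

/-- For traceless Hermitian `Δ` with `(1/2)‖Δ‖₁ ≤ ε` and Hermitian `L`,
`tr(LΔ) ≤ ε(λ₊(L) − λ₋(L))`, with the stated equality conditions in terms of the Jordan
decomposition `Δ = Δ₊ − Δ₋` and the support projections `π₊, π₋`. -/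

theorem trace_mul_le_of_traceless
    {d : ℕ} (ε : ℝ) (hε : 0 < ε) (Δ L Δp Δn Pp Pn : Matrix (Fin d) (Fin d) ℂ)
    (hΔ : Δ.IsHermitian) (hL : L.IsHermitian)
    (htr : Δ.trace = 0) (hball : (1 / 2 : ℝ) * traceNorm Δ ≤ ε)
    (hΔp : Δp.PosSemidef) (hΔn : Δn.PosSemidef)
    (hJordan : Δ = Δp - Δn) (hOrth : Δp * Δn = 0)
    (hPp : IsSupportProj Pp Δp) (hPn : IsSupportProj Pn Δn) :
    ((L * Δ).trace).re ≤ ε * (lamMax L - lamMin L) ∧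
    (((L * Δ).trace).re = ε * (lamMax L - lamMin L) ↔
      (((1 / 2 : ℝ) * traceNorm Δ = ε ∨
          ∃ c : ℝ, L = (c : ℂ) • (1 : Matrix (Fin d) (Fin d) ℂ)) ∧
       Pp * L * Pp = ((lamMax L : ℂ) • Pp) ∧
       Pn * L * Pn = ((lamMin L : ℂ) • Pn))) := by
  rcases Nat.eq_zero_or_pos d with hd | hd
  · subst hd
    have h1 : (L * Δ).trace = 0 := by
      rw [Matrix.trace]
      exact Finset.sum_of_isEmpty _
    have hmax : lamMax L = 0 := Real.iSup_of_isEmpty _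
    have hmin : lamMin L = 0 := Real.iInf_of_isEmpty _
    refine ⟨by rw [h1, hmax, hmin]; simp, ?_, ?_⟩
    · intro _
      exact ⟨Or.inr ⟨0, by ext i j; exact i.elim0⟩, by ext i j; exact i.elim0,
        by ext i j; exact i.elim0⟩
    · intro _
      rw [h1, hmax, hmin]
      simp
  haveI : Nonempty (Fin d) := Fin.pos_iff_nonempty.mp hd
  have heigs : eigs L = hL.eigenvalues := by rw [eigs, dif_pos hL]
  have hub : ∀ i, hL.eigenvalues i ≤ lamMax L := by
    intro i
    rw [← congrFun heigs i]
    exact le_ciSup (Set.Finite.bddAbove (Set.finite_range _)) i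
  have hlb : ∀ i, lamMin L ≤ hL.eigenvalues i := by
    intro i
    rw [← congrFun heigs i]
    exact ciInf_le (Set.Finite.bddBelow (Set.finite_range _)) i
  obtain ⟨i0⟩ := (inferInstance : Nonempty (Fin d))
  have hMm : lamMin L ≤ lamMax L := (hlb i0).trans (hub i0)
  have hTp : Δp.trace = Δn.trace := by
    have h : Δp.trace - Δn.trace = 0 := by rw [← Matrix.trace_sub, ← hJordan, htr]
    exact sub_eq_zero.mp h
  set t := (Δp.trace).re with htdef
  have htn : (Δn.trace).re = t := by rw [htdef, hTp]
  have hTN : traceNorm Δ = t + t := by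
    rw [traceNorm_eq_trace_add hΔ hΔp hΔn hJordan hOrth, Matrix.trace_add, Complex.add_re, htn,
      htdef]
  have hhalf : (1 / 2 : ℝ) * traceNorm Δ = t := by rw [hTN]; ring
  have htε : t ≤ ε := by rw [← hhalf]; exact hball
  have hMp : ((lamMax L : ℂ) • (1 : Matrix (Fin d) (Fin d) ℂ) - L).PosSemidef :=
    psd_smul_one_sub hL hub
  obtain ⟨hA', hAiff⟩ := core_bound hL hΔp hPp (lamMax L) hMp
  have hLneg : (-L).IsHermitian := hL.neg
  have hMn' : (((-(lamMin L) : ℝ) : ℂ) • (1 : Matrix (Fin d) (Fin d) ℂ) - (-L)).PosSemidef := by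
    have h1 : (((-(lamMin L) : ℝ) : ℂ) • (1 : Matrix (Fin d) (Fin d) ℂ) - (-L)) =
        L - ((lamMin L : ℝ) : ℂ) • (1 : Matrix (Fin d) (Fin d) ℂ) := by
      rw [Complex.ofReal_neg, neg_smul]
      abel
    rw [h1]
    exact psd_sub_smul_one hL hlb
  obtain ⟨hB', hBiff'⟩ := core_bound hLneg hΔn hPn (-(lamMin L)) hMn'
  have hnegtr : ((-L * Δn).trace).re = -(((L * Δn).trace).re) := by
    rw [Matrix.neg_mul, Matrix.trace_neg, Complex.neg_re]
  have hB : lamMin L * t ≤ ((L * Δn).trace).re := by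
    rw [hnegtr, htn] at hB'
    linarith
  have hsplit : ((L * Δ).trace).re = ((L * Δp).trace).re - ((L * Δn).trace).re := by
    rw [hJordan, Matrix.mul_sub, Matrix.trace_sub, Complex.sub_re]
  have hBiff : (((L * Δn).trace).re = lamMin L * t) ↔
      Pn * L * Pn = ((lamMin L : ℂ) • Pn) := by
    constructor
    · intro h
      have h1 : (((-L) * Δn).trace).re = -(lamMin L) * ((Δn.trace).re) := by
        rw [hnegtr, htn]
        linarith
      have h2 := hBiff'.mp h1
      rw [Matrix.mul_neg, Matrix.neg_mul, Complex.ofReal_neg, neg_smul] at h2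
      exact neg_inj.mp h2
    · intro h
      have h2 : Pn * (-L) * Pn = ((-(lamMin L) : ℝ) : ℂ) • Pn := by
        rw [Matrix.mul_neg, Matrix.neg_mul, h, Complex.ofReal_neg, neg_smul]
      have h3 := hBiff'.mpr h2
      rw [hnegtr, htn] at h3
      linarith
  set A := ((L * Δp).trace).re with hAdef
  set B := ((L * Δn).trace).re with hBdef
  set Mx := lamMax L with hMxdef
  set Mn := lamMin L with hMndef
  have hchain : t * Mx - t * Mn ≤ ε * Mx - ε * Mn := by
    nlinarith [mul_nonneg (sub_nonneg.mpr htε) (sub_nonneg.mpr hMm)]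
  refine ⟨by rw [hsplit]; nlinarith, ?_, ?_⟩
  · intro heq
    rw [hsplit] at heq
    have hAe : A = Mx * t := by nlinarith
    have hBe : B = Mn * t := by nlinarith
    have hprod : (t - ε) * (Mx - Mn) = 0 := by linear_combination heq - hAe + hBe
    refine ⟨?_, hAiff.mp hAe, hBiff.mp hBe⟩
    rcases mul_eq_zero.mp hprod with h | h
    · left
      rw [hhalf]
      linarith
    · right
      exact (exists_smul_iff hL).mpr (by linarith)
  · rintro ⟨h1, h2, h3⟩
    have hAe : A = Mx * t := hAiff.mpr h2
    have hBe : B = Mn * t := hBiff.mpr h3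
    rw [hsplit, hAe, hBe]
    rcases h1 with h1 | h1
    · have h4 : t = ε := by rw [← hhalf, h1]
      rw [h4]
      ring
    · have h4 : Mx = Mn := (exists_smul_iff hL).mp h1
      rw [h4]
      ring
end
end

section
/- Let d ≥ 2, let q = (μ₁,…,μ_d) ∈ Δ_d with μ₁ ≥ μ₂ ≥ … ≥ μ_d, let ε ∈ (0,1], and assume (1/2)Σ_{i=1}^d |μ_i − 1/d| > ε. Then there is a unique pair (α₁, n) ∈ [0,1] × {1,…,d−1} such that Σ_{i=d−n+1}^d |α₁ − μ_i| = ε and μ_{d−n+1} < α₁ ≤ μ_{d−n}, and a unique pair (α₂, m) ∈ [0,1] × {1,…,d−1} such that Σ_{j=1}^m |α₂ − μ_j| = ε and μ_{m+1} ≤ α₂ < μ_m. Moreover α₁ = (Σ_{j=d−n+1}^d μ_j + ε)/n, α₂ = (Σ_{j=1}^m μ_j − ε)/m, and α₁ < 1/d < α₂. -/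
open scoped BigOperators

noncomputable section

namespace AlphaAux

lemma contF {d : ℕ} (μ : Fin d → ℝ) : Continuous (fun a => ∑ i, max (a - μ i) 0) :=
  continuous_finset_sum _ fun i _ => (continuous_id.sub continuous_const).max continuous_const

lemma contG {d : ℕ} (μ : Fin d → ℝ) : Continuous (fun a => ∑ i, max (μ i - a) 0) :=
  continuous_finset_sum _ fun i _ => (continuous_const.sub continuous_id).max continuous_const

lemma F_exists_pos {d : ℕ} (μ : Fin d → ℝ) {a : ℝ}
    (ha : 0 < ∑ i, max (a - μ i) 0) : ∃ i, μ i < a := by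
  by_contra h
  push_neg at h
  have : (∑ i, max (a - μ i) 0) = 0 :=
    Finset.sum_eq_zero fun i _ => max_eq_right (by linarith [h i])
  linarith

lemma F_strict {d : ℕ} (μ : Fin d → ℝ) {a b : ℝ} (hab : a < b)
    (ha : 0 < ∑ i, max (a - μ i) 0) :
    (∑ i, max (a - μ i) 0) < ∑ i, max (b - μ i) 0 := by
  obtain ⟨i₀, hi₀⟩ := F_exists_pos μ ha
  refine Finset.sum_lt_sum (fun i _ => max_le_max (by linarith) le_rfl) ⟨i₀, Finset.mem_univ _, ?_⟩
  rw [max_eq_left (by linarith), max_eq_left (by linarith)]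
  linarith

lemma G_exists_pos {d : ℕ} (μ : Fin d → ℝ) {a : ℝ}
    (ha : 0 < ∑ i, max (μ i - a) 0) : ∃ i, a < μ i := by
  by_contra h
  push_neg at h
  have : (∑ i, max (μ i - a) 0) = 0 :=
    Finset.sum_eq_zero fun i _ => max_eq_right (by linarith [h i])
  linarith

lemma G_strict {d : ℕ} (μ : Fin d → ℝ) {a b : ℝ} (hab : a < b)
    (hb : 0 < ∑ i, max (μ i - b) 0) :
    (∑ i, max (μ i - b) 0) < ∑ i, max (μ i - a) 0 := by
  obtain ⟨i₀, hi₀⟩ := G_exists_pos μ hb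
  refine Finset.sum_lt_sum (fun i _ => max_le_max (by linarith) le_rfl) ⟨i₀, Finset.mem_univ _, ?_⟩
  rw [max_eq_left (by linarith), max_eq_left (by linarith)]
  linarith

lemma abs_split (y : ℝ) : |y| = max y 0 + max (-y) 0 := by
  rcases le_total y 0 with h | h
  · rw [abs_of_nonpos h, max_eq_right h, max_eq_left (by linarith)]; ring
  · rw [abs_of_nonneg h, max_eq_left h, max_eq_right (by linarith)]; ring

lemma max_sub_max (y : ℝ) : max y 0 - max (-y) 0 = y := by
  rcases le_total y 0 with h | h
  · rw [max_eq_right h, max_eq_left (by linarith)]; ring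
  · rw [max_eq_left h, max_eq_right (by linarith)]; ring

end AlphaAux

/-- `lowCond μ ε α n` : `(α, n) = (α₁, n)` satisfies `Σ_{i=d−n+1}^d |α − μᵢ| = ε` and
`μ_{d−n+1} < α ≤ μ_{d−n}` (the latter expressed entrywise, which for non-increasing `μ` is
equivalent). -/
def lowCond {d : ℕ} (μ : Fin d → ℝ) (ε α : ℝ) (n : ℕ) : Prop :=
  0 ≤ α ∧ α ≤ 1 ∧ 1 ≤ n ∧ n ≤ d - 1 ∧
  (∑ i : Fin d, if d - n ≤ (i : ℕ) then |α - μ i| else 0) = ε ∧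
  (∀ i : Fin d, d - n ≤ (i : ℕ) → μ i < α) ∧
  (∀ i : Fin d, (i : ℕ) < d - n → α ≤ μ i)

/-- `highCond μ ε α m` : `(α, m) = (α₂, m)` satisfies `Σ_{j=1}^m |α − μⱼ| = ε` and
`μ_{m+1} ≤ α < μ_m` (the latter expressed entrywise, which for non-increasing `μ` is
equivalent). -/
def highCond {d : ℕ} (μ : Fin d → ℝ) (ε α : ℝ) (m : ℕ) : Prop :=
  0 ≤ α ∧ α ≤ 1 ∧ 1 ≤ m ∧ m ≤ d - 1 ∧
  (∑ i : Fin d, if (i : ℕ) < m then |α - μ i| else 0) = ε ∧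
  (∀ i : Fin d, (i : ℕ) < m → α < μ i) ∧
  (∀ i : Fin d, m ≤ (i : ℕ) → μ i ≤ α)

/-- Existence and uniqueness of the pairs `(α₁, n)` and `(α₂, m)` of
Lemma 10, together with the explicit formulas for `α₁, α₂` and the bounds
`α₁ < 1/d < α₂`. -/
theorem exists_unique_alpha_pairs
    {d : ℕ} (hd : 2 ≤ d) (μ : Fin d → ℝ)
    (hμ0 : ∀ i, 0 ≤ μ i) (hμ1 : ∑ i, μ i = 1)
    (hsort : ∀ i j : Fin d, i ≤ j → μ j ≤ μ i)
    (ε : ℝ) (hε : ε ∈ Set.Ioc (0 : ℝ) 1)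
    (hfar : ε < (1 / 2 : ℝ) * ∑ i, |μ i - 1 / d|) :
    ∃ (α₁ : ℝ) (n : ℕ) (α₂ : ℝ) (m : ℕ),
      lowCond μ ε α₁ n ∧
      (∀ (α₁' : ℝ) (n' : ℕ), lowCond μ ε α₁' n' → α₁' = α₁ ∧ n' = n) ∧
      highCond μ ε α₂ m ∧
      (∀ (α₂' : ℝ) (m' : ℕ), highCond μ ε α₂' m' → α₂' = α₂ ∧ m' = m) ∧
      α₁ = ((∑ i : Fin d, if d - n ≤ (i : ℕ) then μ i else 0) + ε) / n ∧
      α₂ = ((∑ i : Fin d, if (i : ℕ) < m then μ i else 0) - ε) / m ∧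
      α₁ < 1 / d ∧ 1 / d < α₂ := by
  classical
  obtain ⟨hε0, hε1⟩ := hε
  have hd0 : 0 < d := by omega
  have hdR0 : (0:ℝ) < d := by exact_mod_cast hd0
  set c : ℝ := 1 / d with hc
  have hc0 : 0 ≤ c := by positivity
  have hc1 : c ≤ 1 := by
    rw [hc, div_le_one hdR0]; exact_mod_cast Nat.one_le_of_lt hd
  have hsum0 : (∑ i, (μ i - c)) = 0 := by
    rw [Finset.sum_sub_distrib, hμ1, Finset.sum_const, Finset.card_univ, Fintype.card_fin,
      nsmul_eq_mul, hc]
    field_simp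
    norm_num
  have hFG : (∑ i, max (c - μ i) 0) = ∑ i, max (μ i - c) 0 := by
    have h1 : (∑ i, (max (μ i - c) 0 - max (c - μ i) 0)) = ∑ i, (μ i - c) := by
      refine Finset.sum_congr rfl fun i _ => ?_
      have := AlphaAux.max_sub_max (μ i - c)
      rw [neg_sub] at this
      exact this
    rw [Finset.sum_sub_distrib, hsum0] at h1
    linarith
  have habs : (∑ i, |μ i - c|) = (∑ i, max (μ i - c) 0) + ∑ i, max (c - μ i) 0 := by
    rw [← Finset.sum_add_distrib]
    refine Finset.sum_congr rfl fun i _ => ?_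
    have := AlphaAux.abs_split (μ i - c)
    rw [neg_sub] at this
    exact this
  have hεFc : ε < ∑ i, max (c - μ i) 0 := by
    have h2 : (∑ i, |μ i - c|) = 2 * ∑ i, max (c - μ i) 0 := by
      rw [habs, hFG]; ring
    rw [h2] at hfar
    linarith
  have hεGc : ε < ∑ i, max (μ i - c) 0 := by rw [← hFG]; exact hεFc
  have hμ0big : c ≤ μ (⟨0, hd0⟩ : Fin d) := by
    have h1 : (1:ℝ) ≤ d * μ ⟨0, hd0⟩ := by
      calc (1:ℝ) = ∑ i, μ i := hμ1.symm
        _ ≤ ∑ _i : Fin d, μ ⟨0, hd0⟩ :=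
            Finset.sum_le_sum fun i _ => hsort ⟨0, hd0⟩ i (by simp [Fin.le_def])
        _ = d * μ ⟨0, hd0⟩ := by
            rw [Finset.sum_const, Finset.card_univ, Fintype.card_fin, nsmul_eq_mul]
    rw [hc, div_le_iff₀ hdR0]
    linarith
  have hμlast : μ (⟨d - 1, by omega⟩ : Fin d) ≤ c := by
    have h1 : (d:ℝ) * μ (⟨d - 1, by omega⟩ : Fin d) ≤ 1 := by
      calc (d : ℝ) * μ ⟨d - 1, by omega⟩
          = ∑ _i : Fin d, μ ⟨d - 1, by omega⟩ := by
            rw [Finset.sum_const, Finset.card_univ, Fintype.card_fin, nsmul_eq_mul]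
        _ ≤ ∑ i, μ i :=
            Finset.sum_le_sum fun i _ => hsort i ⟨d - 1, by omega⟩ (by
              rw [Fin.le_def]; exact Nat.le_sub_one_of_lt i.isLt)
        _ = 1 := hμ1
    rw [hc, le_div_iff₀ hdR0]
    linarith
  have hμle1 : ∀ i, μ i ≤ 1 := by
    intro i
    have := Finset.single_le_sum (f := μ) (fun j _ => hμ0 j) (Finset.mem_univ i)
    rw [hμ1] at this
    exact this
  ------------------------------------------------------------------
  -- LOW side
  ------------------------------------------------------------------
  have hF0 : (fun a => ∑ i, max (a - μ i) 0) 0 = 0 :=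
    Finset.sum_eq_zero fun i _ => max_eq_right (by linarith [hμ0 i])
  obtain ⟨α₁, hα₁mem, hFα₁⟩ :
      ∃ a ∈ Set.Icc (0:ℝ) c, (∑ i, max (a - μ i) 0) = ε := by
    have h := intermediate_value_Icc hc0 ((AlphaAux.contF μ).continuousOn)
    have hmem : ε ∈ Set.Icc ((fun a => ∑ i, max (a - μ i) 0) 0)
        ((fun a => ∑ i, max (a - μ i) 0) c) := by
      constructor
      · rw [hF0]; exact hε0.le
      · exact hεFc.le
    obtain ⟨a, ha, hfa⟩ := h hmem
    exact ⟨a, ha, hfa⟩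
  obtain ⟨hα₁0, hα₁c⟩ := hα₁mem
  have hα₁ltc : α₁ < c := by
    rcases lt_or_eq_of_le hα₁c with h | h
    · exact h
    · exfalso; rw [h] at hFα₁; linarith
  have hα₁le1 : α₁ ≤ 1 := le_trans hα₁c hc1
  have hFα₁pos : 0 < ∑ i, max (α₁ - μ i) 0 := by rw [hFα₁]; exact hε0
  obtain ⟨j₀, hj₀⟩ := AlphaAux.F_exists_pos μ hFα₁pos
  obtain ⟨k, hkmemF, hkminF⟩ :=
    Finset.exists_min_image (Finset.univ.filter (fun i : Fin d => μ i < α₁)) id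
      ⟨j₀, by simp [hj₀]⟩
  have hkmem : μ k < α₁ := (Finset.mem_filter.mp hkmemF).2
  have hkmin : ∀ i : Fin d, μ i < α₁ → k ≤ i := fun i hi => hkminF i (by simp [hi])
  have hup : ∀ i : Fin d, (k : ℕ) ≤ (i : ℕ) → μ i < α₁ := by
    intro i hi
    have := hsort k i (by rw [Fin.le_def]; exact hi)
    linarith
  have hdown : ∀ i : Fin d, (i : ℕ) < (k : ℕ) → α₁ ≤ μ i := by
    intro i hi
    by_contra h
    push_neg at h
    have := hkmin i h
    rw [Fin.le_def] at this
    omega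
  have hk1 : 1 ≤ (k : ℕ) := by
    by_contra h
    have hkv : (k : ℕ) = 0 := by omega
    have heq : (⟨0, hd0⟩ : Fin d) = k := Fin.ext (by simp [hkv])
    rw [← heq] at hkmem
    linarith
  set n : ℕ := d - (k : ℕ) with hn
  have hdn : d - n = (k : ℕ) := Nat.sub_sub_self k.isLt.le
  have hn1 : 1 ≤ n := by have := k.isLt; omega
  have hnd1 : n ≤ d - 1 := by omega
  have hfilter : Finset.univ.filter (fun i : Fin d => (k : ℕ) ≤ (i : ℕ)) = Finset.Ici k := by
    ext i
    simp only [Finset.mem_filter, Finset.mem_univ, true_and, Finset.mem_Ici, Fin.le_def]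
  have hcard : (Finset.univ.filter (fun i : Fin d => (k : ℕ) ≤ (i : ℕ))).card = n := by
    rw [hfilter, Fin.card_Ici]
  have hsum_abs : (∑ i : Fin d, if (k : ℕ) ≤ (i : ℕ) then |α₁ - μ i| else 0)
      = ∑ i, max (α₁ - μ i) 0 := by
    refine Finset.sum_congr rfl fun i _ => ?_
    by_cases h : (k : ℕ) ≤ (i : ℕ)
    · rw [if_pos h, abs_of_pos (by linarith [hup i h]), max_eq_left (by linarith [hup i h])]
    · rw [if_neg h, max_eq_right (by linarith [hdown i (by omega)])]
  have hsplit : (∑ i, max (α₁ - μ i) 0)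
      = (n : ℝ) * α₁ - (∑ i : Fin d, if (k : ℕ) ≤ (i : ℕ) then μ i else 0) := by
    have h1 : (∑ i, max (α₁ - μ i) 0)
        = (∑ i : Fin d, if (k : ℕ) ≤ (i : ℕ) then α₁ else 0)
          - (∑ i : Fin d, if (k : ℕ) ≤ (i : ℕ) then μ i else 0) := by
      rw [← Finset.sum_sub_distrib]
      refine Finset.sum_congr rfl fun i _ => ?_
      by_cases h : (k : ℕ) ≤ (i : ℕ)
      · rw [if_pos h, if_pos h, max_eq_left (by linarith [hup i h])]
      · rw [if_neg h, if_neg h, max_eq_right (by linarith [hdown i (by omega)])]; ring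
    have h2 : (∑ i : Fin d, if (k : ℕ) ≤ (i : ℕ) then α₁ else 0) = (n : ℝ) * α₁ := by
      rw [← Finset.sum_filter, Finset.sum_const, hcard, nsmul_eq_mul]
    rw [h1, h2]
  have hformula₁ : α₁ = ((∑ i : Fin d, if d - n ≤ (i : ℕ) then μ i else 0) + ε) / n := by
    have hnR : (0:ℝ) < n := by exact_mod_cast hn1
    rw [hdn, eq_div_iff (ne_of_gt hnR)]
    linarith [hsplit, hFα₁]
  ------------------------------------------------------------------
  -- HIGH side
  ------------------------------------------------------------------
  have hG1 : (fun a => ∑ i, max (μ i - a) 0) 1 = 0 :=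
    Finset.sum_eq_zero fun i _ => max_eq_right (by linarith [hμle1 i])
  obtain ⟨α₂, hα₂mem, hGα₂⟩ :
      ∃ a ∈ Set.Icc c 1, (∑ i, max (μ i - a) 0) = ε := by
    have h := intermediate_value_Icc' hc1 ((AlphaAux.contG μ).continuousOn)
    have hmem : ε ∈ Set.Icc ((fun a => ∑ i, max (μ i - a) 0) 1)
        ((fun a => ∑ i, max (μ i - a) 0) c) := by
      constructor
      · rw [hG1]; exact hε0.le
      · exact hεGc.le
    obtain ⟨a, ha, hfa⟩ := h hmem
    exact ⟨a, ha, hfa⟩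
  obtain ⟨hα₂c, hα₂1⟩ := hα₂mem
  have hα₂gtc : c < α₂ := by
    rcases lt_or_eq_of_le hα₂c with h | h
    · exact h
    · exfalso; rw [← h] at hGα₂; linarith
  have hα₂0 : 0 ≤ α₂ := le_trans hc0 hα₂c
  have hGα₂pos : 0 < ∑ i, max (μ i - α₂) 0 := by rw [hGα₂]; exact hε0
  obtain ⟨j₁, hj₁⟩ := AlphaAux.G_exists_pos μ hGα₂pos
  obtain ⟨k₂, hk₂memF, hk₂maxF⟩ :=
    Finset.exists_max_image (Finset.univ.filter (fun i : Fin d => α₂ < μ i)) id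
      ⟨j₁, by simp [hj₁]⟩
  have hk₂mem : α₂ < μ k₂ := (Finset.mem_filter.mp hk₂memF).2
  have hk₂max : ∀ i : Fin d, α₂ < μ i → i ≤ k₂ := fun i hi => hk₂maxF i (by simp [hi])
  set m : ℕ := (k₂ : ℕ) + 1 with hm
  have hdown₂ : ∀ i : Fin d, (i : ℕ) < m → α₂ < μ i := by
    intro i hi
    have hik : i ≤ k₂ := by rw [Fin.le_def]; omega
    have := hsort i k₂ hik
    linarith
  have hup₂ : ∀ i : Fin d, m ≤ (i : ℕ) → μ i ≤ α₂ := by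
    intro i hi
    by_contra h
    push_neg at h
    have := hk₂max i h
    rw [Fin.le_def] at this
    omega
  have hm1 : 1 ≤ m := by omega
  have hk₂lt : (k₂ : ℕ) < d - 1 := by
    have hle : (k₂ : ℕ) ≤ d - 1 := by have := k₂.isLt; omega
    rcases lt_or_eq_of_le hle with h | h
    · exact h
    · exfalso
      have heq : (⟨d - 1, by omega⟩ : Fin d) = k₂ := Fin.ext (by simp [h])
      rw [← heq] at hk₂mem
      linarith
  have hmd1 : m ≤ d - 1 := by omega
  have hfilter₂ : Finset.univ.filter (fun i : Fin d => (i : ℕ) < m) = Finset.Iic k₂ := by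
    ext i
    simp only [Finset.mem_filter, Finset.mem_univ, true_and, Finset.mem_Iic, Fin.le_def]
    omega
  have hcard₂ : (Finset.univ.filter (fun i : Fin d => (i : ℕ) < m)).card = m := by
    rw [hfilter₂, Fin.card_Iic]
  have hsum_abs₂ : (∑ i : Fin d, if (i : ℕ) < m then |α₂ - μ i| else 0)
      = ∑ i, max (μ i - α₂) 0 := by
    refine Finset.sum_congr rfl fun i _ => ?_
    by_cases h : (i : ℕ) < m
    · rw [if_pos h, abs_of_neg (by linarith [hdown₂ i h]), neg_sub,
        max_eq_left (by linarith [hdown₂ i h])]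
    · rw [if_neg h, max_eq_right (by linarith [hup₂ i (by omega)])]
  have hsplit₂ : (∑ i, max (μ i - α₂) 0)
      = (∑ i : Fin d, if (i : ℕ) < m then μ i else 0) - (m : ℝ) * α₂ := by
    have h1 : (∑ i, max (μ i - α₂) 0)
        = (∑ i : Fin d, if (i : ℕ) < m then μ i else 0)
          - (∑ i : Fin d, if (i : ℕ) < m then α₂ else 0) := by
      rw [← Finset.sum_sub_distrib]
      refine Finset.sum_congr rfl fun i _ => ?_
      by_cases h : (i : ℕ) < m
      · rw [if_pos h, if_pos h, max_eq_left (by linarith [hdown₂ i h])]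
      · rw [if_neg h, if_neg h, max_eq_right (by linarith [hup₂ i (by omega)])]; ring
    have h2 : (∑ i : Fin d, if (i : ℕ) < m then α₂ else 0) = (m : ℝ) * α₂ := by
      rw [← Finset.sum_filter, Finset.sum_const, hcard₂, nsmul_eq_mul]
    rw [h1, h2]
  have hformula₂ : α₂ = ((∑ i : Fin d, if (i : ℕ) < m then μ i else 0) - ε) / m := by
    have hmR : (0:ℝ) < m := by exact_mod_cast hm1
    rw [eq_div_iff (ne_of_gt hmR)]
    linarith [hsplit₂, hGα₂]
  ------------------------------------------------------------------
  -- uniqueness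
  ------------------------------------------------------------------
  have huniq_low : ∀ (α' : ℝ) (n' : ℕ), lowCond μ ε α' n' → α' = α₁ ∧ n' = n := by
    intro α' n' h'
    obtain ⟨h0', h1', hn1', hnd', hsum', hlt', hge'⟩ := h'
    have hF' : (∑ i, max (α' - μ i) 0) = ε := by
      rw [← hsum']
      refine Finset.sum_congr rfl fun i _ => ?_
      by_cases h : d - n' ≤ (i : ℕ)
      · rw [if_pos h, abs_of_pos (by linarith [hlt' i h]), max_eq_left (by linarith [hlt' i h])]
      · rw [if_neg h, max_eq_right (by linarith [hge' i (by omega)])]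
    have hα'eq : α' = α₁ := by
      rcases lt_trichotomy α' α₁ with h | h | h
      · exfalso
        have := AlphaAux.F_strict μ h (by rw [hF']; exact hε0)
        rw [hF', hFα₁] at this; linarith
      · exact h
      · exfalso
        have := AlphaAux.F_strict μ h hFα₁pos
        rw [hF', hFα₁] at this; linarith
    subst hα'eq
    refine ⟨rfl, ?_⟩
    have hidx : d - n' < d := by omega
    have h1 : (k : ℕ) ≤ d - n' := by
      have h2 := hkmin ⟨d - n', hidx⟩ (hlt' ⟨d - n', hidx⟩ (by simp))
      rw [Fin.le_def] at h2
      simpa using h2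
    have h2 : d - n' ≤ (k : ℕ) := by
      by_contra h
      push_neg at h
      have := hge' k h
      linarith
    omega
  have huniq_high : ∀ (α' : ℝ) (m' : ℕ), highCond μ ε α' m' → α' = α₂ ∧ m' = m := by
    intro α' m' h'
    obtain ⟨h0', h1', hm1', hmd', hsum', hlt', hge'⟩ := h'
    have hG' : (∑ i, max (μ i - α') 0) = ε := by
      rw [← hsum']
      refine Finset.sum_congr rfl fun i _ => ?_
      by_cases h : (i : ℕ) < m'
      · rw [if_pos h, abs_of_neg (by linarith [hlt' i h]), neg_sub,
          max_eq_left (by linarith [hlt' i h])]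
      · rw [if_neg h, max_eq_right (by linarith [hge' i (by omega)])]
    have hα'eq : α' = α₂ := by
      rcases lt_trichotomy α' α₂ with h | h | h
      · exfalso
        have := AlphaAux.G_strict μ h hGα₂pos
        rw [hG', hGα₂] at this; linarith
      · exact h
      · exfalso
        have := AlphaAux.G_strict μ h (by rw [hG']; exact hε0)
        rw [hG', hGα₂] at this; linarith
    subst hα'eq
    refine ⟨rfl, ?_⟩
    have h1 : (k₂ : ℕ) < m' := by
      by_contra h
      push_neg at h
      have := hge' k₂ h
      linarith
    have hm'd : m' - 1 < d := by omega
    have h2 : m' - 1 ≤ (k₂ : ℕ) := by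
      have hlt := hlt' ⟨m' - 1, hm'd⟩ (by simpa using (by omega : m' - 1 < m'))
      have h3 := hk₂max ⟨m' - 1, hm'd⟩ hlt
      rw [Fin.le_def] at h3
      simpa using h3
    omega
  ------------------------------------------------------------------
  refine ⟨α₁, n, α₂, m, ?_, huniq_low, ?_, huniq_high, hformula₁, hformula₂, hα₁ltc, hα₂gtc⟩
  · unfold lowCond
    refine ⟨hα₁0, hα₁le1, hn1, hnd1, ?_, ?_, ?_⟩
    · rw [hdn, hsum_abs]; exact hFα₁
    · intro i hi; exact hup i (by omega)
    · intro i hi; exact hdown i (by omega)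
  · unfold highCond
    exact ⟨hα₂0, hα₂1, hm1, hmd1, by rw [hsum_abs₂]; exact hGα₂, hdown₂, hup₂⟩
end
end
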